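/- arXiv:2510.22377 — 3 statements merged into one kernel-verified Lean document; each statement's English description precedes it below -/
import Mathlib

section
/- A right-infinite binary word w : ℕ → {a,b} is Sturmian (balanced and aperiodic) if and only if its complexity function satisfies p(w,n) = n + 1 for every n ≥ 1. -/
/-!
STATEMENT 8: A right-infinite binary word `w` (`a = false`, `b = true`) is
Sturmian (balanced and aperiodic) if and only if its complexity function
satisfies `p(w,n) = n + 1` for every `n ≥ 1`.
-/

namespace StringBricks
open scoped Classical

def IsFactor (w : ℕ → Bool) (u : List Bool) : Prop :=
  ∃ i : ℕ, ∀ j : Fin u.length, w (i + j) = u.get j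

def BalancedWord (w : ℕ → Bool) : Prop :=
  ∀ u v : List Bool, IsFactor w u → IsFactor w v → u.length = v.length →
    |(u.count true : ℤ) - (v.count true : ℤ)| ≤ 1

def EventuallyPeriodic (w : ℕ → Bool) : Prop :=
  ∃ N p : ℕ, 1 ≤ p ∧ ∀ n : ℕ, N ≤ n → w (n + p) = w n

def SturmianWord (w : ℕ → Bool) : Prop :=
  BalancedWord w ∧ ¬ EventuallyPeriodic w

/-- The complexity function: the number of distinct factors of `w` of length `n`. -/
noncomputable def complexity (w : ℕ → Bool) (n : ℕ) : ℕ :=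
  Set.ncard {u : List Bool | u.length = n ∧ IsFactor w u}


/-! ### windows -/

def win (w : ℕ → Bool) (i n : ℕ) : List Bool := List.ofFn fun j : Fin n => w (i + j)

@[simp] lemma win_length (w : ℕ → Bool) (i n : ℕ) : (win w i n).length = n := by
  simp [win]

lemma win_getElem (w : ℕ → Bool) (i n t : ℕ) (ht : t < n) :
    (win w i n)[t]'(by simpa using ht) = w (i + t) := by
  simp [win]

lemma win_ext {w : ℕ → Bool} {i j n : ℕ}
    (h : ∀ t, t < n → w (i + t) = w (j + t)) : win w i n = win w j n := by
  apply List.ext_getElem (by simp)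
  intro t h1 h2
  rw [win_getElem w i n t (by simpa using h1), win_getElem w j n t (by simpa using h1)]
  exact h t (by simpa using h1)

lemma eq_win_iff {w : ℕ → Bool} {u : List Bool} {i : ℕ} :
    u = win w i u.length ↔ ∀ j : Fin u.length, w (i + j) = u.get j := by
  constructor
  · rintro h ⟨t, ht⟩
    simp only [List.get_eq_getElem]
    rw [List.getElem_of_eq h ht, win_getElem w i u.length t (by simpa using ht)]
  · intro h
    apply List.ext_getElem (by simp)
    intro t h1 h2
    rw [win_getElem w i u.length t (by simpa using h2)]
    exact (h ⟨t, h1⟩).symm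

lemma isFactor_iff_win {w : ℕ → Bool} {u : List Bool} :
    IsFactor w u ↔ ∃ i, u = win w i u.length := by
  unfold IsFactor
  constructor
  · rintro ⟨i, h⟩; exact ⟨i, eq_win_iff.2 h⟩
  · rintro ⟨i, h⟩; exact ⟨i, eq_win_iff.1 h⟩

lemma isFactor_win (w : ℕ → Bool) (i n : ℕ) : IsFactor w (win w i n) := by
  rw [isFactor_iff_win]; exact ⟨i, by simp⟩

lemma win_succ_head (w : ℕ → Bool) (i n : ℕ) :
    win w i (n + 1) = w i :: win w (i + 1) n := by
  apply List.ext_getElem (by simp)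
  intro t h1 h2
  rw [win_getElem w i (n+1) t (by simpa using h1)]
  cases t with
  | zero => simp
  | succ t =>
      rw [List.getElem_cons_succ]
      rw [win_getElem w (i+1) n t (by simp at h1; omega)]
      exact congrArg w (by omega)

lemma win_succ_last (w : ℕ → Bool) (i n : ℕ) :
    win w i (n + 1) = win w i n ++ [w (i + n)] := by
  apply List.ext_getElem (by simp)
  intro t h1 h2
  rw [win_getElem w i (n+1) t (by simpa using h1)]
  rcases Nat.lt_or_ge t n with h | h
  · rw [List.getElem_append_left (by simpa using h)]
    rw [win_getElem w i n t h]
  · have : t = n := by simp at h1; omega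
    subst this
    rw [List.getElem_append_right (by simp)]
    simp

lemma win_add (w : ℕ → Bool) (i a b : ℕ) :
    win w i (a + b) = win w i a ++ win w (i + a) b := by
  induction b with
  | zero => simp [win]
  | succ b ih =>
      rw [show a + (b+1) = (a+b)+1 by ring, win_succ_last, ih, win_succ_last,
        List.append_assoc, show i + (a+b) = i+a+b from by ring]


/-! ### factor closure -/

lemma isFactor_dropLast {w : ℕ → Bool} {u : List Bool} (h : IsFactor w u) :
    IsFactor w u.dropLast := by
  rw [isFactor_iff_win] at h ⊢
  obtain ⟨i, hi⟩ := h
  refine ⟨i, ?_⟩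
  cases u with
  | nil => simp [win]
  | cons a l =>
      have hl : (a :: l).length = l.length + 1 := by simp
      rw [hl, win_succ_last] at hi
      have := congrArg List.dropLast hi
      simpa [List.dropLast_concat] using this

lemma isFactor_tail {w : ℕ → Bool} {u : List Bool} (h : IsFactor w u) :
    IsFactor w u.tail := by
  rw [isFactor_iff_win] at h ⊢
  obtain ⟨i, hi⟩ := h
  refine ⟨i + 1, ?_⟩
  cases u with
  | nil => simp [win]
  | cons a l =>
      have hl : (a :: l).length = l.length + 1 := by simp
      rw [hl, win_succ_head] at hi
      simpa using congrArg List.tail hi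

/-! ### finite factor sets -/

noncomputable def facs (w : ℕ → Bool) (n : ℕ) : Finset (List Bool) :=
  ((Finset.univ : Finset (Fin n → Bool)).image (fun f => List.ofFn f)).filter (IsFactor w)

lemma mem_facs {w : ℕ → Bool} {n : ℕ} {u : List Bool} :
    u ∈ facs w n ↔ u.length = n ∧ IsFactor w u := by
  unfold facs
  rw [Finset.mem_filter, Finset.mem_image]
  constructor
  · rintro ⟨⟨f, _, rfl⟩, h2⟩; exact ⟨by simp, h2⟩
  · rintro ⟨h1, h2⟩
    refine ⟨⟨fun j => u.get (Fin.cast h1.symm j), Finset.mem_univ _, ?_⟩, h2⟩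
    subst h1
    simp [List.ofFn_get]

lemma win_mem_facs (w : ℕ → Bool) (i n : ℕ) : win w i n ∈ facs w n := by
  rw [mem_facs]; exact ⟨by simp, isFactor_win w i n⟩

lemma complexity_eq_card (w : ℕ → Bool) (n : ℕ) :
    complexity w n = (facs w n).card := by
  unfold complexity
  have : {u : List Bool | u.length = n ∧ IsFactor w u} = (facs w n : Set (List Bool)) := by
    ext u; simp [mem_facs]
  rw [this, Set.ncard_coe_finset]

lemma facs_zero (w : ℕ → Bool) : facs w 0 = {[]} := by
  ext u
  simp only [mem_facs, Finset.mem_singleton, List.length_eq_zero_iff]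
  constructor
  · rintro ⟨h, _⟩; exact h
  · rintro rfl; exact ⟨rfl, by simpa [win] using isFactor_win w 0 0⟩

noncomputable def rsp (w : ℕ → Bool) (n : ℕ) : Finset (List Bool) :=
  (facs w n).filter (fun u => IsFactor w (u ++ [false]) ∧ IsFactor w (u ++ [true]))

noncomputable def lsp (w : ℕ → Bool) (n : ℕ) : Finset (List Bool) :=
  (facs w n).filter (fun u => IsFactor w (false :: u) ∧ IsFactor w (true :: u))

lemma pair_filter_card {p : List Bool → Prop} {a b : List Bool} (hab : a ≠ b)
    (hpos : p a ∨ p b) :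
    (({a, b} : Finset (List Bool)).filter p).card = if p a ∧ p b then 2 else 1 := by
  by_cases ha : p a <;> by_cases hb : p b <;>
    simp_all [Finset.filter_insert, Finset.filter_singleton, hab]

lemma exists_right_ext {w : ℕ → Bool} {u : List Bool} (h : IsFactor w u) :
    ∃ c, IsFactor w (u ++ [c]) := by
  rw [isFactor_iff_win] at h
  obtain ⟨i, hi⟩ := h
  refine ⟨w (i + u.length), ?_⟩
  rw [isFactor_iff_win]
  refine ⟨i, ?_⟩
  rw [show (u ++ [w (i + u.length)]).length = u.length + 1 by simp, win_succ_last, ← hi]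

lemma card_facs_succ (w : ℕ → Bool) (n : ℕ) :
    (facs w (n+1)).card = (facs w n).card + (rsp w n).card := by
  classical
  have hmap : ∀ v ∈ facs w (n+1), v.dropLast ∈ facs w n := by
    intro v hv
    rw [mem_facs] at hv ⊢
    exact ⟨by simp [hv.1], isFactor_dropLast hv.2⟩
  rw [Finset.card_eq_sum_card_fiberwise hmap]
  have hfib : ∀ u ∈ facs w n,
      (Finset.filter (fun v => v.dropLast = u) (facs w (n+1)))
        = ({u ++ [false], u ++ [true]} : Finset (List Bool)).filter (IsFactor w) := by
    intro u hu
    rw [mem_facs] at hu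
    ext v
    simp only [Finset.mem_filter, mem_facs, Finset.mem_insert, Finset.mem_singleton]
    constructor
    · rintro ⟨⟨hlen, hfac⟩, rfl⟩
      have hne : v ≠ [] := by intro h; rw [h] at hlen; simp at hlen
      have := List.dropLast_append_getLast hne
      rcases Bool.dichotomy (v.getLast hne) with h | h
      · exact ⟨Or.inl (by rw [h] at this; exact this.symm), hfac⟩
      · exact ⟨Or.inr (by rw [h] at this; exact this.symm), hfac⟩
    · rintro ⟨h | h, hfac⟩ <;> subst h <;>
        exact ⟨⟨by simp [hu.1], hfac⟩, by simp⟩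
  have hstep1 : ∑ u ∈ facs w n, (Finset.filter (fun v => v.dropLast = u) (facs w (n+1))).card
      = ∑ u ∈ facs w n, (({u ++ [false], u ++ [true]} : Finset (List Bool)).filter (IsFactor w)).card :=
    Finset.sum_congr rfl (fun u hu => congrArg Finset.card (hfib u hu))
  rw [hstep1]
  have hcell : ∀ u ∈ facs w n,
      (({u ++ [false], u ++ [true]} : Finset (List Bool)).filter (IsFactor w)).card
        = 1 + (if IsFactor w (u ++ [false]) ∧ IsFactor w (u ++ [true]) then 1 else 0) := by
    intro u hu
    rw [mem_facs] at hu
    have hne : u ++ [false] ≠ u ++ [true] := by simp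
    obtain ⟨c, hc⟩ := exists_right_ext hu.2
    have hpos : IsFactor w (u ++ [false]) ∨ IsFactor w (u ++ [true]) := by
      rcases Bool.dichotomy c with h | h <;> rw [h] at hc
      · exact Or.inl hc
      · exact Or.inr hc
    rw [pair_filter_card hne hpos]
    split <;> simp
  rw [Finset.sum_congr rfl hcell, Finset.sum_add_distrib]
  congr 1
  · simp
  · rw [rsp, Finset.card_filter]

lemma card_facs_succ_left (w : ℕ → Bool) (n : ℕ)
    (hrec : ∀ u ∈ facs w n, ∃ c, IsFactor w (c :: u)) :
    (facs w (n+1)).card = (facs w n).card + (lsp w n).card := by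
  classical
  have hmap : ∀ v ∈ facs w (n+1), v.tail ∈ facs w n := by
    intro v hv
    rw [mem_facs] at hv ⊢
    exact ⟨by simp [hv.1], isFactor_tail hv.2⟩
  rw [Finset.card_eq_sum_card_fiberwise hmap]
  have hfib : ∀ u ∈ facs w n,
      (Finset.filter (fun v => v.tail = u) (facs w (n+1)))
        = ({false :: u, true :: u} : Finset (List Bool)).filter (IsFactor w) := by
    intro u hu
    rw [mem_facs] at hu
    ext v
    simp only [Finset.mem_filter, mem_facs, Finset.mem_insert, Finset.mem_singleton]
    constructor
    · rintro ⟨⟨hlen, hfac⟩, rfl⟩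
      cases v with
      | nil => simp at hlen
      | cons a l =>
          rcases Bool.dichotomy a with h | h <;> subst h
          · exact ⟨Or.inl (by simp), hfac⟩
          · exact ⟨Or.inr (by simp), hfac⟩
    · rintro ⟨h | h, hfac⟩ <;> subst h <;>
        exact ⟨⟨by simp [hu.1], hfac⟩, by simp⟩
  have hstep1 : ∑ u ∈ facs w n, (Finset.filter (fun v => v.tail = u) (facs w (n+1))).card
      = ∑ u ∈ facs w n, (({false :: u, true :: u} : Finset (List Bool)).filter (IsFactor w)).card :=
    Finset.sum_congr rfl (fun u hu => congrArg Finset.card (hfib u hu))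
  rw [hstep1]
  have hcell : ∀ u ∈ facs w n,
      (({false :: u, true :: u} : Finset (List Bool)).filter (IsFactor w)).card
        = 1 + (if IsFactor w (false :: u) ∧ IsFactor w (true :: u) then 1 else 0) := by
    intro u hu
    have hne : (false :: u) ≠ (true :: u) := by simp
    obtain ⟨c, hc⟩ := hrec u hu
    have hpos : IsFactor w (false :: u) ∨ IsFactor w (true :: u) := by
      rcases Bool.dichotomy c with h | h <;> rw [h] at hc
      · exact Or.inl hc
      · exact Or.inr hc
    rw [pair_filter_card hne hpos]
    split <;> simp
  rw [Finset.sum_congr rfl hcell, Finset.sum_add_distrib]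
  congr 1
  · simp
  · rw [lsp, Finset.card_filter]


/-! ### determinism and periodicity -/

lemma win_step {w : ℕ → Bool} {i j n : ℕ} (h : win w i n = win w j n)
    (hl : w (i + n) = w (j + n)) : win w (i + 1) n = win w (j + 1) n := by
  apply win_ext
  intro t ht
  rcases Nat.lt_or_ge (t + 1) n with h1 | h1
  · have h1' : t + 1 < (win w i n).length := by simpa using h1
    have heq := List.getElem_of_eq h h1'
    rw [win_getElem w i n (t+1) h1, win_getElem w j n (t+1) h1] at heq
    rw [show i + 1 + t = i + (t+1) by ring, show j + 1 + t = j + (t+1) by ring]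
    exact heq
  · have ht1 : t + 1 = n := by omega
    rw [show i + 1 + t = i + n by omega, show j + 1 + t = j + n by omega]
    exact hl

lemma periodic_of_det {w : ℕ → Bool} {n : ℕ}
    (hdet : ∀ i j, win w i n = win w j n → w (i + n) = w (j + n)) :
    EventuallyPeriodic w := by
  obtain ⟨i, j, hne, hfij⟩ := Finite.exists_ne_map_eq_of_infinite
    (fun i : ℕ => (fun t : Fin n => w (i + t)))
  have hwin : ∀ i j : ℕ, (fun t : Fin n => w (i + t)) = (fun t : Fin n => w (j + t)) →
      win w i n = win w j n := by
    intro i j h; unfold win; rw [h]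
  wlog hij : i < j generalizing i j
  · exact this j i hne.symm hfij.symm (by omega)
  have key : ∀ t, win w (i + t) n = win w (j + t) n := by
    intro t
    induction t with
    | zero => simpa using hwin i j hfij
    | succ t ih =>
        rw [show i + (t+1) = (i + t) + 1 by ring, show j + (t+1) = (j + t) + 1 by ring]
        exact win_step ih (hdet _ _ ih)
  have hlet : ∀ t, w (i + t) = w (j + t) := by
    intro t
    have := hdet (i + t) (j + t) (key t)
    cases n with
    | zero => simpa using this
    | succ n =>
        have h0' : 0 < (win w (i+t) (n+1)).length := by simp
        have h0 := List.getElem_of_eq (key t) h0'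
        rw [win_getElem w (i+t) (n+1) 0 (by omega), win_getElem w (j+t) (n+1) 0 (by omega)] at h0
        simp only [Nat.add_zero] at h0
        exact h0
  refine ⟨i, j - i, by omega, ?_⟩
  intro k hk
  have := hlet (k - i)
  rw [show i + (k - i) = k by omega] at this
  rw [show k + (j - i) = j + (k - i) by omega]
  exact this.symm

lemma rsp_nonempty {w : ℕ → Bool} (hnp : ¬ EventuallyPeriodic w) (n : ℕ) :
    (rsp w n).Nonempty := by
  rw [Finset.nonempty_iff_ne_empty]
  intro hemp
  apply hnp
  apply periodic_of_det (n := n)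
  intro i j hij
  by_contra hne
  have h1 : IsFactor w (win w i n ++ [w (i + n)]) := by
    rw [← win_succ_last]; exact isFactor_win w i (n+1)
  have h2 : IsFactor w (win w i n ++ [w (j + n)]) := by
    rw [hij, ← win_succ_last]; exact isFactor_win w j (n+1)
  have hmem : win w i n ∈ rsp w n := by
    rw [rsp, Finset.mem_filter]
    refine ⟨win_mem_facs w i n, ?_, ?_⟩
    · rcases Bool.dichotomy (w (i + n)) with h | h
      · rw [← h]; exact h1
      · rcases Bool.dichotomy (w (j + n)) with h' | h'
        · rw [← h']; exact h2
        · exact absurd (h.trans h'.symm) hne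
    · rcases Bool.dichotomy (w (i + n)) with h | h
      · rcases Bool.dichotomy (w (j + n)) with h' | h'
        · exact absurd (h.trans h'.symm) hne
        · rw [← h']; exact h2
      · rw [← h]; exact h1
  rw [hemp] at hmem
  exact absurd hmem (Finset.notMem_empty _)

lemma card_facs_ge {w : ℕ → Bool} (hnp : ¬ EventuallyPeriodic w) (n : ℕ) :
    n + 1 ≤ (facs w n).card := by
  induction n with
  | zero => rw [facs_zero]; simp
  | succ n ih =>
      rw [card_facs_succ]
      have := Finset.Nonempty.card_pos (rsp_nonempty hnp n)
      omega

lemma card_facs_le_of_EP {w : ℕ → Bool} {N p : ℕ} (hp : 1 ≤ p)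
    (hper : ∀ n, N ≤ n → w (n + p) = w n) (n : ℕ) :
    (facs w n).card ≤ N + p := by
  have hsub : facs w n ⊆ (Finset.range (N+p)).image (fun i => win w i n) := by
    intro u hu
    rw [mem_facs] at hu
    obtain ⟨i, hi⟩ := isFactor_iff_win.1 hu.2
    rw [Finset.mem_image]
    have key : ∀ i : ℕ, ∃ i' < N + p, win w i' n = win w i n := by
      intro i
      induction i using Nat.strong_induction_on with
      | _ i ih =>
          rcases Nat.lt_or_ge i (N + p) with h | h
          · exact ⟨i, h, rfl⟩
          · obtain ⟨i', hi', heq⟩ := ih (i - p) (by omega)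
            refine ⟨i', hi', heq.trans ?_⟩
            apply win_ext
            intro t ht
            rw [show i + t = (i - p + t) + p by omega]
            exact (hper (i - p + t) (by omega)).symm
      
    obtain ⟨i', hlt, heq⟩ := key i
    exact ⟨i', Finset.mem_range.2 hlt, by rw [heq, hu.1] at *; exact hi.symm⟩
  calc (facs w n).card ≤ ((Finset.range (N+p)).image (fun i => win w i n)).card :=
        Finset.card_le_card hsub
    _ ≤ (Finset.range (N+p)).card := Finset.card_image_le
    _ = N + p := by simp

lemma not_eventuallyPeriodic_of_complexity {w : ℕ → Bool}
    (hc : ∀ n, 1 ≤ n → complexity w n = n + 1) : ¬ EventuallyPeriodic w := by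
  rintro ⟨N, p, hp, hper⟩
  have h1 := card_facs_le_of_EP hp hper (N + p)
  have h2 : complexity w (N + p) = N + p + 1 := hc (N + p) (by omega)
  rw [complexity_eq_card] at h2
  omega

/-! ### balanced implies at most one right special factor -/

lemma balanced_rsp_unique {w : ℕ → Bool} (hb : BalancedWord w) :
    ∀ n (u v : List Bool), u ∈ rsp w n → v ∈ rsp w n → u = v := by
  intro n
  induction n with
  | zero =>
      intro u v hu hv
      rw [rsp, Finset.mem_filter, mem_facs] at hu hv
      rw [List.length_eq_zero_iff.1 hu.1.1, List.length_eq_zero_iff.1 hv.1.1]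
  | succ n ih =>
      intro u v hu hv
      rw [rsp, Finset.mem_filter, mem_facs] at hu hv
      obtain ⟨⟨hulen, hufac⟩, hu0, hu1⟩ := hu
      obtain ⟨⟨hvlen, hvfac⟩, hv0, hv1⟩ := hv
      cases u with
      | nil => simp at hulen
      | cons a u' =>
      cases v with
      | nil => simp at hvlen
      | cons b v' =>
      have hmem : ∀ (c : Bool) (l : List Bool), l.length = n → IsFactor w ((c :: l) ++ [false]) →
          IsFactor w ((c :: l) ++ [true]) → l ∈ rsp w n := by
        intro c l hlen h0 h1
        rw [rsp, Finset.mem_filter, mem_facs]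
        refine ⟨⟨hlen, ?_⟩, ?_, ?_⟩
        · have hd : (c :: l ++ [false]).dropLast = c :: l := by
            change ((c :: l) ++ [false]).dropLast = c :: l
            rw [List.dropLast_concat]
          have := isFactor_tail (hd ▸ isFactor_dropLast h0)
          simpa using this
        · simpa using isFactor_tail h0
        · simpa using isFactor_tail h1
      have hu' : u' ∈ rsp w n := hmem a u' (by simpa using hulen) hu0 hu1
      have hv' : v' ∈ rsp w n := hmem b v' (by simpa using hvlen) hv0 hv1
      have heq : u' = v' := ih u' v' hu' hv'
      subst heq
      by_contra hne
      have hab : a ≠ b := by intro h; rw [h] at hne; exact hne rfl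
      have key : ∀ x y : List Bool, IsFactor w x → IsFactor w y → x.length = y.length →
          (y.count true : ℤ) - (x.count true : ℤ) ≤ 1 := by
        intro x y hx hy hl
        have := hb x y hx hy hl
        rw [abs_le] at this
        omega
      rcases Bool.dichotomy a with ha | ha <;> rcases Bool.dichotomy b with hbb | hbb
      · exact hab (ha.trans hbb.symm)
      · -- a = false, b = true
        subst ha; subst hbb
        have := key ((false :: u') ++ [false]) ((true :: u') ++ [true]) hu0 hv1 (by simp)
        simp [List.count_cons, List.count_append] at this
        omega
      · subst ha; subst hbb
        have := key ((false :: u') ++ [false]) ((true :: u') ++ [true]) hv0 hu1 (by simp)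
        simp [List.count_cons, List.count_append] at this
        omega
      · exact hab (ha.trans hbb.symm)

lemma complexity_of_sturmian {w : ℕ → Bool} (hb : BalancedWord w)
    (hnp : ¬ EventuallyPeriodic w) : ∀ n, (facs w n).card = n + 1 := by
  intro n
  induction n with
  | zero => rw [facs_zero]; simp
  | succ n ih =>
      rw [card_facs_succ, ih]
      have h1 : (rsp w n).card ≤ 1 := by
        rw [Finset.card_le_one]
        intro u hu v hv
        exact balanced_rsp_unique hb n u v hu hv
      have h2 := Finset.Nonempty.card_pos (rsp_nonempty hnp n)
      omega


/-! ### consequences of complexity = n+1 -/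

lemma card_facs_of_complexity {w : ℕ → Bool}
    (hc : ∀ n, 1 ≤ n → complexity w n = n + 1) :
    ∀ n, (facs w n).card = n + 1 := by
  intro n
  cases n with
  | zero => rw [facs_zero]; simp
  | succ n =>
      have := hc (n+1) (by omega)
      rwa [complexity_eq_card] at this

lemma rsp_card_one {w : ℕ → Bool}
    (hc : ∀ n, 1 ≤ n → complexity w n = n + 1) (n : ℕ) :
    (rsp w n).card = 1 := by
  have h1 := card_facs_of_complexity hc n
  have h2 := card_facs_of_complexity hc (n+1)
  have h3 := card_facs_succ w n
  omega

lemma rsp_eq_singleton {w : ℕ → Bool}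
    (hc : ∀ n, 1 ≤ n → complexity w n = n + 1) {n : ℕ} {z : List Bool}
    (hz : z ∈ rsp w n) : rsp w n = {z} := by
  have := rsp_card_one hc n
  rw [Finset.card_eq_one] at this
  obtain ⟨a, ha⟩ := this
  rw [ha] at hz ⊢
  rw [Finset.mem_singleton] at hz
  rw [hz]

def shiftw (w : ℕ → Bool) (s : ℕ) : ℕ → Bool := fun t => w (s + t)

lemma win_shiftw (w : ℕ → Bool) (s i n : ℕ) : win (shiftw w s) i n = win w (s + i) n := by
  apply List.ext_getElem (by simp)
  intro t h1 h2
  rw [win_getElem (shiftw w s) i n t (by simpa using h1), win_getElem w (s+i) n t (by simpa using h1)]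
  show w (s + (i + t)) = w (s + i + t)
  rw [Nat.add_assoc]

lemma not_EP_shiftw {w : ℕ → Bool} (hnp : ¬ EventuallyPeriodic w) (s : ℕ) :
    ¬ EventuallyPeriodic (shiftw w s) := by
  rintro ⟨N, p, hp, hper⟩
  apply hnp
  refine ⟨s + N, p, hp, ?_⟩
  intro n hn
  have := hper (n - s) (by omega)
  unfold shiftw at this
  rw [show s + (n - s + p) = n + p by omega, show s + (n - s) = n by omega] at this
  exact this

lemma recur {w : ℕ → Bool} (hc : ∀ n, 1 ≤ n → complexity w n = n + 1)
    {u : List Bool} (hu : IsFactor w u) (s : ℕ) :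
    ∃ i, s ≤ i ∧ u = win w i u.length := by
  have hnp := not_eventuallyPeriodic_of_complexity hc
  have hsub : facs (shiftw w s) u.length ⊆ facs w u.length := by
    intro v hv
    rw [mem_facs] at hv ⊢
    refine ⟨hv.1, ?_⟩
    obtain ⟨i, hi⟩ := isFactor_iff_win.1 hv.2
    rw [isFactor_iff_win]
    exact ⟨s + i, by rw [← win_shiftw]; exact hi⟩
  have hge := card_facs_ge (not_EP_shiftw hnp s) u.length
  have hcard := card_facs_of_complexity hc u.length
  have heq : facs (shiftw w s) u.length = facs w u.length := by
    apply Finset.eq_of_subset_of_card_le hsub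
    omega
  have humem : u ∈ facs (shiftw w s) u.length := by
    rw [heq, mem_facs]; exact ⟨rfl, hu⟩
  rw [mem_facs] at humem
  obtain ⟨i, hi⟩ := isFactor_iff_win.1 humem.2
  rw [win_shiftw] at hi
  exact ⟨s + i, by omega, hi⟩

lemma exists_left_ext {w : ℕ → Bool} (hc : ∀ n, 1 ≤ n → complexity w n = n + 1)
    {u : List Bool} (hu : IsFactor w u) : ∃ c, IsFactor w (c :: u) := by
  obtain ⟨i, hi1, hi2⟩ := recur hc hu 1
  refine ⟨w (i - 1), ?_⟩
  rw [isFactor_iff_win]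
  refine ⟨i - 1, ?_⟩
  rw [show (w (i-1) :: u).length = u.length + 1 by simp, win_succ_head,
    show i - 1 + 1 = i by omega, ← hi2]

lemma lsp_card_one {w : ℕ → Bool}
    (hc : ∀ n, 1 ≤ n → complexity w n = n + 1) (n : ℕ) :
    (lsp w n).card = 1 := by
  have h1 := card_facs_of_complexity hc n
  have h2 := card_facs_of_complexity hc (n+1)
  have h3 := card_facs_succ_left w n (fun u hu => exists_left_ext hc (mem_facs.1 hu).2)
  omega

lemma lsp_eq_singleton {w : ℕ → Bool}
    (hc : ∀ n, 1 ≤ n → complexity w n = n + 1) {n : ℕ} {z : List Bool}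
    (hz : z ∈ lsp w n) : lsp w n = {z} := by
  have := lsp_card_one hc n
  rw [Finset.card_eq_one] at this
  obtain ⟨a, ha⟩ := this
  rw [ha] at hz ⊢
  rw [Finset.mem_singleton] at hz
  rw [hz]


/-! ### negation transfer -/

def negw (w : ℕ → Bool) : ℕ → Bool := fun t => !(w t)

lemma map_not_invol (l : List Bool) : (l.map not).map not = l := by
  induction l with
  | nil => rfl
  | cons a l ih => simp [ih]

lemma isFactor_negw_of {w : ℕ → Bool} {u : List Bool} (h : IsFactor w u) :
    IsFactor (negw w) (u.map not) := by
  rw [isFactor_iff_win] at h ⊢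
  obtain ⟨i, hi⟩ := h
  refine ⟨i, ?_⟩
  apply List.ext_getElem (by simp)
  intro t h1 h2
  rw [win_getElem (negw w) i (u.map not).length t (by simpa using h1)]
  rw [List.getElem_map]
  have h1' : t < u.length := by simpa using h1
  have := List.getElem_of_eq hi h1'
  rw [win_getElem w i u.length t h1'] at this
  rw [this]
  rfl

lemma negw_negw (w : ℕ → Bool) : negw (negw w) = w := by
  funext t; simp [negw]

lemma isFactor_negw_iff {w : ℕ → Bool} {u : List Bool} :
    IsFactor (negw w) (u.map not) ↔ IsFactor w u := by
  constructor
  · intro h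
    have := isFactor_negw_of h
    rwa [negw_negw, map_not_invol] at this
  · exact isFactor_negw_of

lemma facs_negw (w : ℕ → Bool) (n : ℕ) :
    facs (negw w) n = (facs w n).image (List.map not) := by
  ext v
  rw [mem_facs, Finset.mem_image]
  constructor
  · rintro ⟨hlen, hfac⟩
    refine ⟨v.map not, ?_, map_not_invol v⟩
    rw [mem_facs]
    constructor
    · simpa using hlen
    · rw [← isFactor_negw_iff, map_not_invol]
      exact hfac
  · rintro ⟨u, hu, rfl⟩
    rw [mem_facs] at hu
    exact ⟨by simpa using hu.1, isFactor_negw_of hu.2⟩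

lemma complexity_negw (w : ℕ → Bool) (n : ℕ) :
    complexity (negw w) n = complexity w n := by
  rw [complexity_eq_card, complexity_eq_card, facs_negw]
  rw [Finset.card_image_of_injective]
  intro a b h
  have := congrArg (List.map not) h
  rwa [map_not_invol, map_not_invol] at this

lemma EP_negw_iff (w : ℕ → Bool) :
    EventuallyPeriodic (negw w) ↔ EventuallyPeriodic w := by
  unfold EventuallyPeriodic negw
  constructor <;>
    · rintro ⟨N, p, hp, hper⟩
      refine ⟨N, p, hp, fun n hn => ?_⟩
      have := hper n hn
      simp only [Bool.not_inj_iff] at this ⊢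
      simp_all


/-! ### counting letters in windows -/

noncomputable def cnt (w : ℕ → Bool) (i n : ℕ) : ℕ := (win w i n).count true

lemma cnt_zero (w : ℕ → Bool) (i : ℕ) : cnt w i 0 = 0 := by
  simp [cnt, win]

lemma cnt_head (w : ℕ → Bool) (i n : ℕ) :
    cnt w i (n+1) = (if w i = true then 1 else 0) + cnt w (i+1) n := by
  rw [cnt, win_succ_head, List.count_cons]
  rw [cnt]
  split <;> split <;> simp_all <;> omega

lemma cnt_last (w : ℕ → Bool) (i n : ℕ) :
    cnt w i (n+1) = cnt w i n + (if w (i+n) = true then 1 else 0) := by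
  rw [cnt, win_succ_last, List.count_append, cnt]
  congr 1
  rcases Bool.dichotomy (w (i+n)) with h | h <;> simp [h]

lemma cnt_add (w : ℕ → Bool) (i a b : ℕ) :
    cnt w i (a+b) = cnt w i a + cnt w (i+a) b := by
  rw [cnt, win_add, List.count_append, cnt, cnt]

lemma cnt_le_len (w : ℕ → Bool) (i n : ℕ) : cnt w i n ≤ n := by
  have := List.count_le_length (l := win w i n) (a := true)
  simpa [cnt] using this

lemma cnt_congr {w : ℕ → Bool} {i j n : ℕ} (h : ∀ t, t < n → w (i+t) = w (j+t)) :
    cnt w i n = cnt w j n := by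
  rw [cnt, cnt, win_ext h]

lemma cnt_rev_eq {w : ℕ → Bool} :
    ∀ (k a b : ℕ), (∀ r, r < k → w (a + r) = w (b + (k - 1 - r))) →
    cnt w a k = cnt w b k := by
  intro k
  induction k with
  | zero => intro a b _; rw [cnt_zero, cnt_zero]
  | succ k ih =>
      intro a b h
      rw [cnt_last, cnt_head]
      have h1 : cnt w a k = cnt w (b+1) k := by
        apply ih
        intro r hr
        have := h r (by omega)
        rw [this]
        exact congrArg w (by omega)
      have h2 : w (a + k) = w b := by
        have := h k (by omega)
        rw [this]
        exact congrArg w (by omega)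
      rw [h1, h2]
      omega


/-! ### unbalanced words give a palindrome z with 0z0 and 1z1 factors -/

lemma unbalanced_palindrome {w : ℕ → Bool} (hnb : ¬ BalancedWord w) :
    ∃ z : List Bool, z.reverse = z ∧ IsFactor w (false :: (z ++ [false])) ∧
      IsFactor w (true :: (z ++ [true])) := by
  classical
  -- extract an unbalanced pair of windows
  have hex : ∃ n, ∃ i j : ℕ, cnt w i n + 2 ≤ cnt w j n := by
    unfold BalancedWord at hnb
    push_neg at hnb
    obtain ⟨u, v, hu, hv, hlen, habs⟩ := hnb
    obtain ⟨iu, hiu⟩ := isFactor_iff_win.1 hu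
    obtain ⟨iv, hiv⟩ := isFactor_iff_win.1 hv
    have hcu : u.count true = cnt w iu u.length := by rw [cnt, ← hiu]
    have hcv : v.count true = cnt w iv u.length := by rw [cnt, hlen, ← hiv]
    rw [hcu, hcv] at habs
    rcases lt_abs.mp habs with h | h
    · exact ⟨u.length, iv, iu, by omega⟩
    · exact ⟨u.length, iu, iv, by omega⟩
  have main : ∃ n, (∃ i j, cnt w i n + 2 ≤ cnt w j n) ∧
      ∀ k, k < n → ∀ a b : ℕ, cnt w b k < cnt w a k + 2 := by
    refine ⟨Nat.find hex, Nat.find_spec hex, ?_⟩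
    intro k hk a b
    have h := Nat.find_min hex hk
    push_neg at h
    exact h a b
  obtain ⟨n₀, ⟨i, j, hij⟩, hmin⟩ := main
  have hn2 : 2 ≤ n₀ := by
    have := cnt_le_len w j n₀
    omega
  obtain ⟨m, rfl⟩ : ∃ m, n₀ = m + 2 := ⟨n₀ - 2, by omega⟩
  -- head letters
  have hdeci : cnt w i (m+2) = (if w i = true then 1 else 0) + cnt w (i+1) (m+1) :=
    cnt_head w i (m+1)
  have hdecj : cnt w j (m+2) = (if w j = true then 1 else 0) + cnt w (j+1) (m+1) :=
    cnt_head w j (m+1)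
  have hhead := hmin (m+1) (by omega) (i+1) (j+1)
  have hbi : (if w i = true then 1 else 0) ≤ 1 := by split <;> omega
  have hbj : (if w j = true then 1 else 0) ≤ 1 := by split <;> omega
  have hwi : w i = false := by
    rcases Bool.dichotomy (w i) with h | h
    · exact h
    · rw [h] at hdeci; simp at hdeci; omega
  have hwj : w j = true := by
    rcases Bool.dichotomy (w j) with h | h
    · rw [h] at hdecj; simp at hdecj
      rw [hwi] at hdeci; simp at hdeci
      omega
    · exact h
  rw [hwi] at hdeci; simp at hdeci
  rw [hwj] at hdecj; simp at hdecj
  -- last letters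
  have hdeci' : cnt w i (m+2) = cnt w i (m+1) + (if w (i+(m+1)) = true then 1 else 0) :=
    cnt_last w i (m+1)
  have hdecj' : cnt w j (m+2) = cnt w j (m+1) + (if w (j+(m+1)) = true then 1 else 0) :=
    cnt_last w j (m+1)
  have hlastp := hmin (m+1) (by omega) i j
  have hbi' : (if w (i+(m+1)) = true then 1 else 0) ≤ 1 := by split <;> omega
  have hbj' : (if w (j+(m+1)) = true then 1 else 0) ≤ 1 := by split <;> omega
  have hwi' : w (i+(m+1)) = false := by
    rcases Bool.dichotomy (w (i+(m+1))) with h | h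
    · exact h
    · rw [h] at hdeci'; simp at hdeci'; omega
  have hwj' : w (j+(m+1)) = true := by
    rcases Bool.dichotomy (w (j+(m+1))) with h | h
    · rw [h] at hdecj'; simp at hdecj'
      rw [hwi'] at hdeci'; simp at hdeci'
      omega
    · exact h
  rw [hwi'] at hdeci'; simp at hdeci'
  rw [hwj'] at hdecj'; simp at hdecj'
  -- exact difference 2
  have hdiff : cnt w j (m+2) = cnt w i (m+2) + 2 := by omega
  -- middle letters agree
  have hmid : ∀ t, 1 ≤ t → t ≤ m → w (i+t) = w (j+t) := by
    by_contra hcon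
    push_neg at hcon
    obtain ⟨t, ht1, htm, hnet⟩ := hcon
    have hexd : ∃ t, 1 ≤ t ∧ t ≤ m ∧ w (i+t) ≠ w (j+t) := ⟨t, ht1, htm, hnet⟩
    have main2 : ∃ t, (1 ≤ t ∧ t ≤ m ∧ w (i+t) ≠ w (j+t)) ∧
        ∀ s, s < t → ¬(1 ≤ s ∧ s ≤ m ∧ w (i+s) ≠ w (j+s)) :=
      ⟨Nat.find hexd, Nat.find_spec hexd, fun s hs => Nat.find_min hexd hs⟩
    obtain ⟨t₀, ⟨ht₀1, ht₀m, hne₀⟩, hmind⟩ := main2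
    obtain ⟨t₁, rfl⟩ : ∃ t₁, t₀ = t₁ + 1 := ⟨t₀ - 1, by omega⟩
    have hmids : ∀ s, 1 ≤ s → s < t₁+1 → w (i+s) = w (j+s) := by
      intro s h1 h2
      by_contra hne'
      exact (hmind s h2) ⟨h1, by omega, hne'⟩
    have hQ : cnt w (i+1) t₁ = cnt w (j+1) t₁ := by
      apply cnt_congr
      intro t ht
      rw [show i+1+t = i+(t+1) by ring, show j+1+t = j+(t+1) by ring]
      exact hmids (t+1) (by omega) (by omega)
    have e1 : cnt w i (t₁+2) = (if w i = true then 1 else 0) + cnt w (i+1) (t₁+1) :=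
      cnt_head w i (t₁+1)
    have e2 : cnt w (i+1) (t₁+1) = cnt w (i+1) t₁ + (if w (i+(t₁+1)) = true then 1 else 0) := by
      have := cnt_last w (i+1) t₁
      rwa [show i+1+t₁ = i+(t₁+1) by ring] at this
    have e3 : cnt w j (t₁+2) = (if w j = true then 1 else 0) + cnt w (j+1) (t₁+1) :=
      cnt_head w j (t₁+1)
    have e4 : cnt w (j+1) (t₁+1) = cnt w (j+1) t₁ + (if w (j+(t₁+1)) = true then 1 else 0) := by
      have := cnt_last w (j+1) t₁
      rwa [show j+1+t₁ = j+(t₁+1) by ring] at this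
    rw [hwi] at e1; simp at e1
    rw [hwj] at e3; simp at e3
    rcases Bool.dichotomy (w (i+(t₁+1))) with hA | hA <;>
      rcases Bool.dichotomy (w (j+(t₁+1))) with hB | hB
    · exact hne₀ (hA.trans hB.symm)
    · -- prefix pair of length t₁+2
      rw [hA] at e2; simp at e2
      rw [hB] at e4; simp at e4
      have := hmin (t₁+2) (by omega) i j
      omega
    · -- suffix pair of length m - t₁
      rw [hA] at e2; simp at e2
      rw [hB] at e4; simp at e4
      have f1 : cnt w i (m+2) = cnt w i (t₁+2) + cnt w (i+(t₁+2)) (m - t₁) := by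
        have := cnt_add w i (t₁+2) (m - t₁)
        rwa [show (t₁+2) + (m - t₁) = m+2 by omega] at this
      have f2 : cnt w j (m+2) = cnt w j (t₁+2) + cnt w (j+(t₁+2)) (m - t₁) := by
        have := cnt_add w j (t₁+2) (m - t₁)
        rwa [show (t₁+2) + (m - t₁) = m+2 by omega] at this
      have := hmin (m - t₁) (by omega) (i+(t₁+2)) (j+(t₁+2))
      omega
    · exact hne₀ (hA.trans hB.symm)
  -- the common middle word
  have hzj : win w (j+1) m = win w (i+1) m := by
    apply win_ext
    intro t ht
    rw [show j+1+t = j+(t+1) by ring, show i+1+t = i+(t+1) by ring]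
    exact (hmid (t+1) (by omega) (by omega)).symm
  have hwinfull : ∀ a : ℕ, win w a (m+2) = w a :: (win w (a+1) m ++ [w (a+(m+1))]) := by
    intro a
    rw [show m+2 = (m+1)+1 from rfl, win_succ_head, win_succ_last,
      show a+1+m = a+(m+1) by ring]
  have hfac0 : IsFactor w (false :: (win w (i+1) m ++ [false])) := by
    have h := hwinfull i
    rw [hwi, hwi'] at h
    exact h ▸ isFactor_win w i (m+2)
  have hfac1 : IsFactor w (true :: (win w (i+1) m ++ [true])) := by
    have h := hwinfull j
    rw [hwj, hwj', hzj] at h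
    exact h ▸ isFactor_win w j (m+2)
  -- palindromicity
  have hpalw : ∀ t, t < m → w (i+1+t) = w (i+1+(m-1-t)) := by
    by_contra hcon
    push_neg at hcon
    obtain ⟨t, htm, hnet⟩ := hcon
    have hexd : ∃ t, t < m ∧ w (i+1+t) ≠ w (i+1+(m-1-t)) := ⟨t, htm, hnet⟩
    have main3 : ∃ t, (t < m ∧ w (i+1+t) ≠ w (i+1+(m-1-t))) ∧
        ∀ s, s < t → ¬(s < m ∧ w (i+1+s) ≠ w (i+1+(m-1-s))) :=
      ⟨Nat.find hexd, Nat.find_spec hexd, fun s hs => Nat.find_min hexd hs⟩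
    obtain ⟨t₀, ⟨ht₀m, hne₀⟩, hmind⟩ := main3
    have hminp : ∀ s, s < t₀ → w (i+1+s) = w (i+1+(m-1-s)) := by
      intro s hs
      by_contra hne'
      exact (hmind s hs) ⟨by omega, hne'⟩
    have ht₀lt : t₀ < m - 1 - t₀ := by
      rcases Nat.lt_trichotomy t₀ (m-1-t₀) with h | h | h
      · exact h
      · exact absurd (congrArg w (by omega)) hne₀
      · exfalso
        have hs : m - 1 - t₀ < t₀ := h
        have := hminp (m-1-t₀) hs
        rw [show m-1-(m-1-t₀) = t₀ by omega] at this
        exact hne₀ this.symm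
    have hR : cnt w (i+1+(m-t₀)) t₀ = cnt w (i+1) t₀ := by
      apply cnt_rev_eq
      intro r hr
      have h1 := hminp (t₀-1-r) (by omega)
      rw [show i+1+(m-t₀)+r = i+1+(m-1-(t₀-1-r)) by omega]
      exact h1.symm
    rcases Bool.dichotomy (w (i+1+t₀)) with hA | hA <;>
      rcases Bool.dichotomy (w (i+1+(m-1-t₀))) with hB | hB
    · exact hne₀ (hA.trans hB.symm)
    · -- case α : w(i+1+t₀) = false, w(i+1+(m-1-t₀)) = true
      -- low pair : prefix of the i-window, suffix of the j-window, each length t₀+2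
      have e1 : cnt w i (t₀+2) = (if w i = true then 1 else 0) + cnt w (i+1) (t₀+1) :=
        cnt_head w i (t₀+1)
      have e2 : cnt w (i+1) (t₀+1) = cnt w (i+1) t₀ + (if w (i+1+t₀) = true then 1 else 0) :=
        cnt_last w (i+1) t₀
      rw [hwi] at e1; simp at e1
      rw [hA] at e2; simp at e2
      have e3 : cnt w (j+(m-t₀)) (t₀+2)
          = (if w (j+(m-t₀)) = true then 1 else 0) + cnt w (j+(m-t₀)+1) (t₀+1) :=
        cnt_head w (j+(m-t₀)) (t₀+1)
      have e4 : cnt w (j+(m-t₀)+1) (t₀+1)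
          = cnt w (j+(m-t₀)+1) t₀ + (if w (j+(m-t₀)+1+t₀) = true then 1 else 0) :=
        cnt_last w (j+(m-t₀)+1) t₀
      have hh1 : w (j+(m-t₀)) = true := by
        have := hmid (m-t₀) (by omega) (by omega)
        rw [show i+(m-t₀) = i+1+(m-1-t₀) by omega] at this
        rw [← this, hB]
      have hh2 : cnt w (j+(m-t₀)+1) t₀ = cnt w (i+1) t₀ := by
        rw [← hR]
        apply cnt_congr
        intro t ht
        rw [show j+(m-t₀)+1+t = j+((m-t₀)+1+t) by ring,
          show i+1+(m-t₀)+t = i+((m-t₀)+1+t) by ring]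
        exact (hmid ((m-t₀)+1+t) (by omega) (by omega)).symm
      have hh3 : w (j+(m-t₀)+1+t₀) = true := by
        rw [show j+(m-t₀)+1+t₀ = j+(m+1) by omega]
        exact hwj'
      rw [hh1] at e3; simp at e3
      rw [hh3] at e4; simp at e4
      rw [hh2] at e4
      have := hmin (t₀+2) (by omega) i (j+(m-t₀))
      omega
    · -- case β : w(i+1+t₀) = true, w(i+1+(m-1-t₀)) = false
      -- pair : prefix of the j-window, suffix of the i-window
      have e1 : cnt w j (t₀+2) = (if w j = true then 1 else 0) + cnt w (j+1) (t₀+1) :=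
        cnt_head w j (t₀+1)
      have e2 : cnt w (j+1) (t₀+1) = cnt w (j+1) t₀ + (if w (j+1+t₀) = true then 1 else 0) :=
        cnt_last w (j+1) t₀
      have hQ' : cnt w (j+1) t₀ = cnt w (i+1) t₀ := by
        apply cnt_congr
        intro t ht
        rw [show j+1+t = j+(t+1) by ring, show i+1+t = i+(t+1) by ring]
        exact (hmid (t+1) (by omega) (by omega)).symm
      have hj2 : w (j+1+t₀) = true := by
        have := hmid (t₀+1) (by omega) (by omega)
        rw [show j+1+t₀ = j+(t₀+1) by ring, ← this, show i+(t₀+1) = i+1+t₀ by ring, hA]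
      rw [hwj] at e1; simp at e1
      rw [hj2] at e2; simp at e2
      rw [hQ'] at e2
      have e3 : cnt w (i+(m-t₀)) (t₀+2)
          = (if w (i+(m-t₀)) = true then 1 else 0) + cnt w (i+(m-t₀)+1) (t₀+1) :=
        cnt_head w (i+(m-t₀)) (t₀+1)
      have e4 : cnt w (i+(m-t₀)+1) (t₀+1)
          = cnt w (i+(m-t₀)+1) t₀ + (if w (i+(m-t₀)+1+t₀) = true then 1 else 0) :=
        cnt_last w (i+(m-t₀)+1) t₀
      have hh1 : w (i+(m-t₀)) = false := by
        rw [show i+(m-t₀) = i+1+(m-1-t₀) by omega]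
        exact hB
      have hh2 : cnt w (i+(m-t₀)+1) t₀ = cnt w (i+1) t₀ := by
        rw [← hR]
        apply cnt_congr
        intro t ht
        exact congrArg w (by omega)
      have hh3 : w (i+(m-t₀)+1+t₀) = false := by
        rw [show i+(m-t₀)+1+t₀ = i+(m+1) by omega]
        exact hwi'
      rw [hh1] at e3; simp at e3
      rw [hh3] at e4; simp at e4
      rw [hh2] at e4
      have := hmin (t₀+2) (by omega) (i+(m-t₀)) j
      omega
    · exact hne₀ (hA.trans hB.symm)
  refine ⟨win w (i+1) m, ?_, hfac0, hfac1⟩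
  apply List.ext_getElem (by simp)
  intro t h1 h2
  have htm : t < m := by simpa using h2
  rw [List.getElem_reverse]
  rw [win_getElem w (i+1) m t htm]
  have hlen : (win w (i+1) m).length = m := by simp
  rw [win_getElem w (i+1) m ((win w (i+1) m).length - 1 - t) (by omega)]
  rw [hlen]
  exact (hpalw t htm).symm


/-! ### helpers for the final argument -/

lemma dropLast_cons_concat (c d : Bool) (l : List Bool) :
    (c :: (l ++ [d])).dropLast = c :: l := by
  change ((c :: l) ++ [d]).dropLast = c :: l
  rw [List.dropLast_concat]

lemma win_decomp (w : ℕ → Bool) (a m : ℕ) :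
    win w a (m+2) = w a :: (win w (a+1) m ++ [w (a+(m+1))]) := by
  rw [show m+2 = (m+1)+1 from rfl, win_succ_head, win_succ_last, show a+1+m = a+(m+1) by ring]

lemma win_two (w : ℕ → Bool) (t : ℕ) : win w t 2 = [w t, w (t+1)] := by
  have := win_decomp w t 0
  simpa [win] using this

lemma rsp_mem_of {w : ℕ → Bool} {u : List Bool} {c d : Bool}
    (h1 : IsFactor w (u ++ [c])) (h2 : IsFactor w (u ++ [d])) (hcd : c ≠ d) :
    u ∈ rsp w u.length := by
  have hu : IsFactor w u := by
    have := isFactor_dropLast h1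
    rwa [List.dropLast_concat] at this
  rw [rsp, Finset.mem_filter, mem_facs]
  refine ⟨⟨rfl, hu⟩, ?_, ?_⟩
  · rcases Bool.dichotomy c with hc | hc
    · rwa [hc] at h1
    · rcases Bool.dichotomy d with hd | hd
      · rwa [hd] at h2
      · exact absurd (hc.trans hd.symm) hcd
  · rcases Bool.dichotomy c with hc | hc
    · rcases Bool.dichotomy d with hd | hd
      · exact absurd (hc.trans hd.symm) hcd
      · rwa [hd] at h2
    · rwa [hc] at h1

lemma lsp_mem_of {w : ℕ → Bool} {u : List Bool} {c d : Bool}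
    (h1 : IsFactor w (c :: u)) (h2 : IsFactor w (d :: u)) (hcd : c ≠ d) :
    u ∈ lsp w u.length := by
  have hu : IsFactor w u := by simpa using isFactor_tail h1
  rw [lsp, Finset.mem_filter, mem_facs]
  refine ⟨⟨rfl, hu⟩, ?_, ?_⟩
  · rcases Bool.dichotomy c with hc | hc
    · rwa [hc] at h1
    · rcases Bool.dichotomy d with hd | hd
      · rwa [hd] at h2
      · exact absurd (hc.trans hd.symm) hcd
  · rcases Bool.dichotomy c with hc | hc
    · rcases Bool.dichotomy d with hd | hd
      · exact absurd (hc.trans hd.symm) hcd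
      · rwa [hd] at h2
    · rwa [hc] at h1

lemma win_step_pred {w : ℕ → Bool} {i j n : ℕ} (h : win w (i+1) n = win w (j+1) n)
    (hl : w i = w j) : win w i n = win w j n := by
  apply win_ext
  intro t ht
  cases t with
  | zero => simpa using hl
  | succ t =>
      have h1' : t < (win w (i+1) n).length := by simp; omega
      have heq := List.getElem_of_eq h h1'
      rw [win_getElem w (i+1) n t (by omega), win_getElem w (j+1) n t (by omega)] at heq
      rw [show i + (t+1) = i+1+t by ring, show j + (t+1) = j+1+t by ring]
      exact heq

lemma win_letter {w : ℕ → Bool} {i j n : ℕ} (h : win w i n = win w j n) (t : ℕ) (ht : t < n) :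
    w (i + t) = w (j + t) := by
  have h1' : t < (win w i n).length := by simp; omega
  have heq := List.getElem_of_eq h h1'
  rwa [win_getElem w i n t ht, win_getElem w j n t ht] at heq


/-! ### the final contradiction -/

lemma final_contradiction {w : ℕ → Bool}
    (hc : ∀ n, 1 ≤ n → complexity w n = n + 1)
    {z : List Bool} (hpal : z.reverse = z)
    (h00 : IsFactor w (false :: (z ++ [false])))
    (h11 : IsFactor w (true :: (z ++ [true])))
    (h10 : ¬ IsFactor w (true :: (z ++ [false]))) : False := by
  classical
  have hnp := not_eventuallyPeriodic_of_complexity hc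
  set m := z.length with hm
  rcases Nat.eq_zero_or_pos m with hm0 | hmpos
  · -- degenerate case m = 0
    have hznil : z = [] := List.length_eq_zero_iff.1 (by omega)
    subst hznil
    have hstep : ∀ t, w t = true → w (t+1) = true := by
      intro t ht
      rcases Bool.dichotomy (w (t+1)) with h | h
      · exfalso
        apply h10
        have hwt : win w t 2 = true :: ([] ++ [false]) := by
          rw [win_two, ht, h]; rfl
        exact hwt ▸ isFactor_win w t 2
      · exact h
    obtain ⟨it, hit⟩ := isFactor_iff_win.1 h11
    rw [show (true :: (([]:List Bool) ++ [true])).length = 2 from rfl, win_two] at hit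
    have hit1 : w it = true := by
      have : ([true, true] : List Bool) = [w it, w (it+1)] := hit
      simpa using congrArg (fun l => l[0]!) this
    have hall : ∀ s, it ≤ s → w s = true := by
      intro s hs
      induction s, hs using Nat.le_induction with
      | base => exact hit1
      | succ s hs ih => exact hstep s ih
    exact hnp ⟨it, 1, le_refl 1, fun n hn => by rw [hall n hn, hall (n+1) (by omega)]⟩
  -- main case : m ≥ 1
  have hz0' : IsFactor w (false :: z) := by
    have := isFactor_dropLast h00
    rwa [dropLast_cons_concat] at this
  have hz1' : IsFactor w (true :: z) := by
    have := isFactor_dropLast h11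
    rwa [dropLast_cons_concat] at this
  have hzfac : IsFactor w z := by simpa using isFactor_tail hz0'
  have hz0 : IsFactor w (z ++ [false]) := by simpa using isFactor_tail h00
  have hz1 : IsFactor w (z ++ [true]) := by simpa using isFactor_tail h11
  have hoccinf : ∀ s, ∃ t, s ≤ t ∧ win w t m = z := by
    intro s
    obtain ⟨t, hst, hwt⟩ := recur hc hzfac s
    exact ⟨t, hst, by rw [hm]; exact hwt.symm⟩
  have hrsp : rsp w m = {z} := by
    apply rsp_eq_singleton hc
    have := rsp_mem_of hz0 hz1 (by simp)
    rwa [← hm] at this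
  have hlsp : lsp w m = {z} := by
    apply lsp_eq_singleton hc
    have := lsp_mem_of hz0' hz1' (by simp)
    rwa [← hm] at this
  have fwd_det : ∀ i j, win w i m = win w j m → win w i m ≠ z → w (i+m) = w (j+m) := by
    intro i j he hnz
    by_contra hne
    have h1 : IsFactor w (win w i m ++ [w (i+m)]) := by
      rw [← win_succ_last]; exact isFactor_win w i (m+1)
    have h2 : IsFactor w (win w i m ++ [w (j+m)]) := by
      rw [he, ← win_succ_last]; exact isFactor_win w j (m+1)
    have hmem := rsp_mem_of h1 h2 hne
    rw [win_length, hrsp, Finset.mem_singleton] at hmem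
    exact hnz hmem
  have bwd_det : ∀ i j, win w (i+1) m = win w (j+1) m → win w (i+1) m ≠ z → w i = w j := by
    intro i j he hnz
    by_contra hne
    have h1 : IsFactor w (w i :: win w (i+1) m) := by
      rw [← win_succ_head]; exact isFactor_win w i (m+1)
    have h2 : IsFactor w (w j :: win w (i+1) m) := by
      rw [he, ← win_succ_head]; exact isFactor_win w j (m+1)
    have hmem := lsp_mem_of h1 h2 hne
    rw [win_length, hlsp, Finset.mem_singleton] at hmem
    exact hnz hmem
  have master_fwd : ∀ T i j, win w i m = win w j m →
      (∀ t, t < T → win w (i+t) m = z → win w (j+t) m = z → w (i+t+m) = w (j+t+m)) →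
      win w (i+T) m = win w (j+T) m := by
    intro T
    induction T with
    | zero => intro i j he _; simpa using he
    | succ T ih =>
        intro i j he H
        have hT : win w (i+T) m = win w (j+T) m := ih i j he (fun t ht => H t (by omega))
        have hlet : w (i+T+m) = w (j+T+m) := by
          by_cases hocc : win w (i+T) m = z
          · exact H T (by omega) hocc (hT.symm.trans hocc)
          · exact fwd_det (i+T) (j+T) hT hocc
        have := win_step hT hlet
        rwa [show i+T+1 = i+(T+1) by ring, show j+T+1 = j+(T+1) by ring] at this
  have master_bwd : ∀ T i j, win w (i+T) m = win w (j+T) m →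
      (∀ s, 1 ≤ s → s ≤ T → win w (i+s) m ≠ z) →
      ∀ s, s ≤ T → win w (i+s) m = win w (j+s) m := by
    intro T
    induction T with
    | zero =>
        intro i j htop _ s hs
        have : s = 0 := by omega
        subst this; exact htop
    | succ T ih =>
        intro i j htop H
        have hstep : win w (i+T) m = win w (j+T) m := by
          have htop' : win w ((i+T)+1) m = win w ((j+T)+1) m := by
            rwa [show i+T+1 = i+(T+1) by ring, show j+T+1 = j+(T+1) by ring]
          have hnz : win w ((i+T)+1) m ≠ z := by
            rw [show i+T+1 = i+(T+1) by ring]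
            exact H (T+1) (by omega) (le_refl _)
          exact win_step_pred htop' (bwd_det (i+T) (j+T) htop' hnz)
        intro s hs
        rcases Nat.lt_or_ge s (T+1) with h | h
        · exact ih i j hstep (fun s' h1 h2 => H s' h1 (by omega)) s (by omega)
        · have : s = T+1 := by omega
          subst this; exact htop
  have hnxt_ex : ∀ i : ℕ, ∃ k, win w (i+1+k) m = z := by
    intro i
    obtain ⟨t, h1, h2⟩ := hoccinf (i+1)
    exact ⟨t - (i+1), by rwa [show i+1+(t-(i+1)) = t by omega]⟩
  obtain ⟨nxt, hnxt⟩ : ∃ nxt : ℕ → ℕ, ∀ i, i < nxt i ∧ win w (nxt i) m = z ∧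
      ∀ t, i < t → t < nxt i → win w t m ≠ z := by
    refine ⟨fun i => i + 1 + Nat.find (hnxt_ex i), fun i => ⟨?_, Nat.find_spec (hnxt_ex i), ?_⟩⟩
    · show i < i + 1 + Nat.find (hnxt_ex i)
      omega
    · intro t h1 h2
      have h2' : t < i + 1 + Nat.find (hnxt_ex i) := h2
      have := Nat.find_min (hnxt_ex i) (m := t - (i+1)) (by omega)
      rw [show i+1+(t-(i+1)) = t by omega] at this
      exact this
  have gap_le : ∀ i j, win w i m = z → win w j m = z → w (i+m) = w (j+m) →
      nxt j - j ≤ nxt i - i := by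
    intro i j hi hj hb
    obtain ⟨hgti, hocci', hmini⟩ := hnxt i
    have hieq : nxt i = i + (nxt i - i) := by omega
    have hwd : win w (i+(nxt i - i)) m = win w (j+(nxt i - i)) m := by
      apply master_fwd (nxt i - i) i j (hi.trans hj.symm)
      intro t ht h1 h2
      rcases Nat.eq_zero_or_pos t with rfl | htpos
      · simpa using hb
      · exact absurd h1 (hmini (i+t) (by omega) (by omega))
    have hoccjd : win w (j+(nxt i - i)) m = z := by
      rw [← hwd, ← hieq]; exact hocci'
    obtain ⟨hgtj, hoccj', hminj⟩ := hnxt j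
    by_contra hcon
    exact (hminj (j+(nxt i - i)) (by omega) (by omega)) hoccjd
  have gap_eq : ∀ i j, win w i m = z → win w j m = z → w (i+m) = w (j+m) →
      nxt i - i = nxt j - j :=
    fun i j hi hj hb => le_antisymm (gap_le j i hj hi hb.symm) (gap_le i j hi hj hb)
  have PER : ∀ i, win w i m = z → (∀ j, win w j m = z → i ≤ j → w (j+m) = w (i+m)) → False := by
    intro i hi hall
    obtain ⟨hgt, hoccn, _⟩ := hnxt i
    have hkey : ∀ T, win w (i+T) m = win w (nxt i + T) m := by
      intro T
      apply master_fwd T i (nxt i) (hi.trans hoccn.symm)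
      intro t ht h1 h2
      rw [hall (i+t) h1 (by omega), hall (nxt i + t) h2 (by omega)]
    apply hnp
    refine ⟨i, nxt i - i, by omega, ?_⟩
    intro n hn
    have hl := win_letter (hkey (n-i)) 0 hmpos
    rw [Nat.add_zero, Nat.add_zero] at hl
    rw [show i + (n-i) = n by omega] at hl
    rw [show n + (nxt i - i) = nxt i + (n - i) by omega]
    exact hl.symm
  have CHAIN : ∀ i c, win w i m = z → w (i+m) = c →
      (∀ j, win w j m = z → i ≤ j → w (j+m) = c → w (nxt j + m) = c) →
      ∀ j, win w j m = z → i ≤ j → w (j+m) = c := by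
    intro i c hi hbi hstep j
    induction j using Nat.strong_induction_on with
    | _ j ih =>
      intro hj hij
      rcases Nat.eq_or_lt_of_le hij with he | hlt
      · rw [← he]; exact hbi
      · have hSne : ((Finset.range j).filter (fun k => i ≤ k ∧ win w k m = z)).Nonempty := by
          refine ⟨i, ?_⟩
          rw [Finset.mem_filter, Finset.mem_range]
          exact ⟨hlt, le_refl i, hi⟩
        have hj'mem := Finset.max'_mem _ hSne
        rw [Finset.mem_filter, Finset.mem_range] at hj'mem
        obtain ⟨hj'lt, hij', hoccj'⟩ := hj'mem
        obtain ⟨hgt', hocc'', hmin'⟩ :=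
          hnxt (((Finset.range j).filter (fun k => i ≤ k ∧ win w k m = z)).max' hSne)
        have hnxtj' : nxt (((Finset.range j).filter (fun k => i ≤ k ∧ win w k m = z)).max' hSne) = j := by
          rcases Nat.lt_trichotomy
            (nxt (((Finset.range j).filter (fun k => i ≤ k ∧ win w k m = z)).max' hSne)) j
            with h | h | h
          · exfalso
            have hmem2 : nxt (((Finset.range j).filter (fun k => i ≤ k ∧ win w k m = z)).max' hSne)
                ∈ (Finset.range j).filter (fun k => i ≤ k ∧ win w k m = z) := by
              rw [Finset.mem_filter, Finset.mem_range]
              exact ⟨h, by omega, hocc''⟩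
            have := Finset.le_max' _ _ hmem2
            omega
          · exact h
          · exact absurd hj (hmin' j (by omega) (by omega))
        have hbj' := ih _ hj'lt hoccj' hij'
        have := hstep _ hoccj' hij' hbj'
        rwa [hnxtj'] at this
  -- letters inside z, shared between occurrences, and palindromy
  have hsame : ∀ a a' t, win w a m = z → win w a' m = z → t < m → w (a+t) = w (a'+t) :=
    fun a a' t ha ha' ht => win_letter (ha.trans ha'.symm) t ht
  have hpalw : ∀ a t, win w a m = z → t < m → w (a+t) = w (a+(m-1-t)) := by
    intro a t ha ht
    have hrev : (win w a m).reverse = win w a m := by rw [ha]; exact hpal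
    have h1 : t < (win w a m).reverse.length := by simp; omega
    have heq := List.getElem_of_eq hrev h1
    rw [List.getElem_reverse] at heq
    rw [win_getElem w a m t (by omega)] at heq
    rw [win_getElem w a m ((win w a m).length - 1 - t) (by simp; omega)] at heq
    rw [win_length] at heq
    exact heq.symm
  -- an occurrence followed by letter false
  have hocc0 : ∃ i₀, win w i₀ m = z ∧ w (i₀+m) = false := by
    by_contra hno
    push_neg at hno
    obtain ⟨i₁, _, hocc₁⟩ := hoccinf 0
    have htrue : ∀ j, win w j m = z → w (j+m) = true := by
      intro j hj
      rcases Bool.dichotomy (w (j+m)) with h | h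
      · exact absurd h (hno j hj)
      · exact h
    exact PER i₁ hocc₁ (fun j hj _ => (htrue j hj).trans (htrue i₁ hocc₁).symm)
  obtain ⟨i₀, hocci₀, hb₀⟩ := hocc0
  -- adjacent occurrences with letters false then true
  have hadj : ∃ i, win w i m = z ∧ w (i+m) = false ∧ w (nxt i + m) = true := by
    by_contra hno
    push_neg at hno
    have hstep0 : ∀ j, win w j m = z → i₀ ≤ j → w (j+m) = false → w (nxt j + m) = false := by
      intro j hj _ hbj
      rcases Bool.dichotomy (w (nxt j + m)) with h | h
      · exact h
      · exact absurd h (hno j hj hbj)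
    have hch := CHAIN i₀ false hocci₀ hb₀ hstep0
    exact PER i₀ hocci₀ (fun j hj hij => (hch j hj hij).trans hb₀.symm)
  obtain ⟨i, hocci, hb0, hb1⟩ := hadj
  obtain ⟨hgti, hoccni, hmini⟩ := hnxt i
  set p := nxt i - i with hp
  have hieq : nxt i = i + p := by omega
  have hppos : 1 ≤ p := by omega
  obtain ⟨hgtn, hoccnn, hminn⟩ := hnxt (nxt i)
  set q := nxt (nxt i) - nxt i with hq
  have hneq : nxt (nxt i) = i + p + q := by omega
  have hqpos : 1 ≤ q := by omega
  have hfree1 : ∀ t, 0 < t → t < p → win w (i+t) m ≠ z := by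
    intro t h1 h2; exact hmini (i+t) (by omega) (by omega)
  have hfree2 : ∀ t, p < t → t < p+q → win w (i+t) m ≠ z := by
    intro t h1 h2
    have := hminn (i+t) (by omega) (by omega)
    exact this
  have hoccp : win w (i+p) m = z := by rw [← hieq]; exact hoccni
  have hoccpq : win w (i+(p+q)) m = z := by
    rw [show i+(p+q) = i+p+q by ring, ← hneq]; exact hoccnn
  -- counting : p + q ≤ m + 2
  have hpq : p + q ≤ m + 2 := by
    have back_z : ∀ a b T, win w (a+T) m = win w (b+T) m →
        (∀ s, 1 ≤ s → s ≤ T → win w (a+s) m ≠ z) → win w a m = win w b m := by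
      intro a b T htop H
      have := master_bwd T a b htop H 0 (by omega)
      simpa using this
    have haux : ∀ t₁ t₂, t₁ < p+q → t₂ < p+q → t₁ ≠ p → t₂ ≠ p → t₁ < t₂ →
        win w (i+t₁) m ≠ win w (i+t₂) m := by
      intro t₁ t₂ h₁ h₂ hn₁ hn₂ hlt heq
      rcases Nat.eq_zero_or_pos t₁ with rfl | ht₁pos
      · have hzc : win w (i+t₂) m = z := by
          rw [← heq]; simpa using hocci
        rcases Nat.lt_or_ge t₂ p with h | h
        · exact hfree1 t₂ (by omega) h hzc
        · exact hfree2 t₂ (by omega) h₂ hzc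
      rcases Nat.lt_or_ge t₁ p with hc1 | hc1
      · -- t₁ in the first block
        have hback : win w i m = win w (i + (t₂ - t₁)) m := by
          apply back_z i (i + (t₂ - t₁)) t₁
          · rwa [show i + (t₂ - t₁) + t₁ = i + t₂ by omega]
          · intro s h1 h2; exact hfree1 s (by omega) (by omega)
        have hzc : win w (i + (t₂ - t₁)) m = z := hback.symm.trans hocci
        rcases Nat.lt_trichotomy (t₂ - t₁) p with h | h | h
        · exact hfree1 (t₂ - t₁) (by omega) h hzc
        · -- genuine cross case : t₂ = t₁ + p
          have he : win w (i+t₁) m = win w (i+p+t₁) m := by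
            rwa [show i+p+t₁ = i + t₂ by omega]
          -- compare the two gap lengths
          have hfwd : ∀ T', T' ≤ p - t₁ →
              win w (i+t₁+T') m = win w (i+p+t₁+T') m := by
            intro T' hT'
            apply master_fwd T' (i+t₁) (i+p+t₁) he
            intro t ht hz1' hz2'
            exfalso
            exact hfree1 (t₁+t) (by omega) (by omega)
              (by rwa [show i+(t₁+t) = i+t₁+t by ring])
          rcases Nat.lt_trichotomy p q with hpq' | hpq' | hpq'
          · -- p < q : occurrence at offset 2p, inside the second block
            have := hfwd (p - t₁) (le_refl _)
            rw [show i+t₁+(p-t₁) = i+p by omega] at this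
            have hzc2 : win w (i+p+t₁+(p-t₁)) m = z := this.symm.trans hoccp
            rw [show i+p+t₁+(p-t₁) = i+(p+p) by omega] at hzc2
            exact hfree2 (p+p) (by omega) (by omega) hzc2
          · -- p = q : the two blocks coincide, contradicting the letters
            have hws : ∀ s, s ≤ p → win w (i+s) m = win w (i+p+s) m := by
              intro s hs
              rcases Nat.lt_or_ge s t₁ with h' | h'
              · have := master_bwd t₁ i (i+p) (by rwa [show i+p+t₁ = i + t₂ by omega] at he ⊢)
                  (fun s' h1 h2 => hfree1 s' (by omega) (by omega)) s (by omega)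
                exact this
              · have := hfwd (s - t₁) (by omega)
                rwa [show i+t₁+(s-t₁) = i+s by omega, show i+p+t₁+(s-t₁) = i+p+s by omega] at this
            have hs3 : 1 ≤ min p m := by omega
            have hwin := hws (min p m) (by omega)
            have hlet := win_letter hwin (m - min p m) (by omega)
            rw [show i + min p m + (m - min p m) = i + m by omega,
              show i + p + min p m + (m - min p m) = i + p + m by omega] at hlet
            rw [hb0] at hlet
            rw [hieq] at hb1
            rw [show i + p + m = i+p+m from rfl] at hb1
            rw [← hlet] at hb1
            exact Bool.false_ne_true (hb1.symm ▸ rfl)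
          · -- q < p : occurrence at offset q, inside the first block
            have := hfwd (q - t₁) (by omega)
            rw [show i+p+t₁+(q-t₁) = i+(p+q) by omega] at this
            have hzc2 : win w (i+t₁+(q-t₁)) m = z := this.trans hoccpq
            rw [show i+t₁+(q-t₁) = i+q by omega] at hzc2
            exact hfree1 q (by omega) (by omega) hzc2
        · exact hfree2 (t₂ - t₁) h (by omega) hzc
      · -- t₁ in the second block
        have hback : win w (i+p) m = win w ((i+p) + (t₂ - t₁)) m := by
          apply back_z (i+p) ((i+p) + (t₂ - t₁)) (t₁ - p)
          · rw [show i+p+(t₁-p) = i+t₁ by omega, show i+p+(t₂-t₁)+(t₁-p) = i+t₂ by omega]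
            exact heq
          · intro s h1 h2
            have := hfree2 (p+s) (by omega) (by omega)
            rwa [show i+(p+s) = i+p+s by ring] at this
        have hzc : win w ((i+p)+(t₂-t₁)) m = z := hback.symm.trans hoccp
        rw [show (i+p)+(t₂-t₁) = i+(p+(t₂-t₁)) by ring] at hzc
        exact hfree2 (p+(t₂-t₁)) (by omega) (by omega) hzc
    have hinj : Set.InjOn (fun t => win w (i+t) m) ((Finset.range (p+q)).erase p) := by
      intro t₁ h₁ t₂ h₂ he
      simp only [Finset.coe_erase, Set.mem_diff, Finset.coe_range, Set.mem_Iio,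
        Set.mem_singleton_iff] at h₁ h₂
      by_contra hne
      rcases Nat.lt_trichotomy t₁ t₂ with h | h | h
      · exact haux t₁ t₂ h₁.1 h₂.1 h₁.2 h₂.2 h he
      · exact hne h
      · exact haux t₂ t₁ h₂.1 h₁.1 h₂.2 h₁.2 h he.symm
    have hsubset : ((Finset.range (p+q)).erase p).image (fun t => win w (i+t) m) ⊆ facs w m := by
      intro u hu
      rw [Finset.mem_image] at hu
      obtain ⟨t, _, rfl⟩ := hu
      exact win_mem_facs w (i+t) m
    have hcards : ((Finset.range (p+q)).erase p).card = p + q - 1 := by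
      rw [Finset.card_erase_of_mem (by rw [Finset.mem_range]; omega), Finset.card_range]
    have hle := Finset.card_le_card hsubset
    rw [Finset.card_image_of_injOn hinj, hcards, card_facs_of_complexity hc m] at hle
    omega
  -- forcing lemma : occurrence preceded by `true` is followed by `true`
  have hforce : ∀ j, win w (nxt j) m = z → w (nxt j - 1) = true → w (nxt j + m) = true := by
    intro j hoccn hprev
    by_contra hbf'
    have hbf : w (nxt j + m) = false := by
      rcases Bool.dichotomy (w (nxt j + m)) with h | h
      · exact h
      · exact absurd h hbf'
    apply h10
    have hgtj := (hnxt j).1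
    have hwt : win w (nxt j - 1) (m+2) = true :: (z ++ [false]) := by
      rw [win_decomp w (nxt j - 1) m,
        show nxt j - 1 + 1 = nxt j by omega,
        show nxt j - 1 + (m+1) = nxt j + m by omega,
        hprev, hoccn, hbf]
    exact hwt ▸ isFactor_win w (nxt j - 1) (m+2)
  rcases Nat.lt_or_ge m q with hcase | hcase
  · -- q > m : forces p = 1, z constant false
    have hp1 : p = 1 := by omega
    have hocci1 : win w (i+1) m = z := by
      rw [show i+1 = nxt i by omega]; exact hoccni
    have hzval : ∀ t, t < m → w (i+t) = false := by
      have haux2 : ∀ k t, t ≤ m → m - t = k → w (i+t) = false := by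
        intro k
        induction k with
        | zero =>
            intro t h1 h2
            have : t = m := by omega
            subst this; exact hb0
        | succ k ih =>
            intro t h1 h2
            have hlt : t < m := by omega
            have e1 : w (i+t) = w (i+1+t) := win_letter (hocci.trans hocci1.symm) t hlt
            rw [e1, show i+1+t = i+(t+1) by ring]
            exact ih (t+1) (by omega) (by omega)
      intro t ht; exact haux2 (m - t) t (by omega) rfl
    have hstepB : ∀ j, win w j m = z → nxt i ≤ j → w (j+m) = true → w (nxt j + m) = true := by
      intro j hj _ hbj
      have hgapj : nxt j - j = q := by
        have := gap_eq j (nxt i) hj hoccni (by rw [hbj, hb1])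
        omega
      have hnjgt := (hnxt j).1
      have hoccnj := (hnxt j).2.1
      have hprev : w (nxt j - 1) = true := by
        by_contra hf'
        have hf : w (nxt j - 1) = false := by
          rcases Bool.dichotomy (w (nxt j - 1)) with h | h
          · exact h
          · exact absurd h hf'
        have hoccprev : win w (nxt j - 1) m = z := by
          rw [← hocci]
          apply win_ext
          intro t ht
          rcases Nat.eq_zero_or_pos t with rfl | htpos
          · have h0 := hzval 0 (by omega)
            simp only [Nat.add_zero] at h0 ⊢
            rw [hf, h0]
          · have e1 : w (nxt j - 1 + t) = w (nxt j + (t-1)) := congrArg w (by omega)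
            have e2 : w (nxt j + (t-1)) = w (i + (t-1)) := hsame (nxt j) i (t-1) hoccnj hocci (by omega)
            rw [e1, e2, hzval (t-1) (by omega), hzval t ht]
        exact ((hnxt j).2.2 (nxt j - 1) (by omega) (by omega)) hoccprev
      exact hforce j hoccnj hprev
    have hchainB := CHAIN (nxt i) true hoccni hb1 hstepB
    exact PER (nxt i) hoccni (fun j hj hij => (hchainB j hj hij).trans hb1.symm)
  · -- q ≤ m : palindromic forcing
    obtain ⟨q', hq'⟩ : ∃ q', q = q'+1 := ⟨q-1, by omega⟩
    have hstepA : ∀ j, win w j m = z → nxt i ≤ j → w (j+m) = true → w (nxt j + m) = true := by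
      intro j hj _ hbj
      have hgapj : nxt j - j = q := by
        have := gap_eq j (nxt i) hj hoccni (by rw [hbj, hb1])
        omega
      have hnjgt := (hnxt j).1
      have hnj : nxt j = j + q := by omega
      have hoccnj := (hnxt j).2.1
      have hprev : w (nxt j - 1) = true := by
        have e1 : w (j + q') = w (j + (m-1-q')) := hpalw j q' hj (by omega)
        have e2 : w (j + (m-1-q')) = w (nxt j + (m-1-q')) :=
          hsame j (nxt j) (m-1-q') hj hoccnj (by omega)
        have e3 : w (nxt j + (m-1-q')) = w (j + m) := congrArg w (by omega)
        rw [show nxt j - 1 = j + q' by omega, e1, e2, e3]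
        exact hbj
      exact hforce j hoccnj hprev
    have hchainA := CHAIN (nxt i) true hoccni hb1 hstepA
    exact PER (nxt i) hoccni (fun j hj hij => (hchainA j hj hij).trans hb1.symm)


theorem sturmian_iff_complexity (w : ℕ → Bool) :
    SturmianWord w ↔ ∀ n : ℕ, 1 ≤ n → complexity w n = n + 1 := by
  constructor
  · rintro ⟨hb, hnp⟩ n hn
    rw [complexity_eq_card]
    exact complexity_of_sturmian hb hnp n
  · intro hc
    refine ⟨?_, not_eventuallyPeriodic_of_complexity hc⟩
    by_contra hnb
    obtain ⟨z, hpal, h00, h11⟩ := unbalanced_palindrome hnb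
    by_cases h10 : IsFactor w (true :: (z ++ [false]))
    · by_cases h01 : IsFactor w (false :: (z ++ [true]))
      · -- both 0z and 1z would be right special : contradiction
        have hmem0 : (false :: z) ∈ rsp w (false :: z).length := by
          refine rsp_mem_of (c := false) (d := true) ?_ ?_ (by simp)
          · exact h00
          · exact h01
        have hmem1 : (true :: z) ∈ rsp w (true :: z).length := by
          refine rsp_mem_of (c := false) (d := true) ?_ ?_ (by simp)
          · exact h10
          · exact h11
        rw [show (false :: z).length = z.length + 1 from by simp] at hmem0
        rw [show (true :: z).length = z.length + 1 from by simp] at hmem1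
        have hsing := rsp_eq_singleton hc hmem0
        rw [hsing, Finset.mem_singleton] at hmem1
        simp at hmem1
      · -- pass to the negated word
        refine final_contradiction (w := negw w) (z := z.map not)
          (fun n hn => by rw [complexity_negw]; exact hc n hn) ?_ ?_ ?_ ?_
        · rw [← List.map_reverse, hpal]
        · have := isFactor_negw_of h11
          simpa using this
        · have := isFactor_negw_of h00
          simpa using this
        · intro hcon
          apply h01
          have hmap : IsFactor (negw w) ((false :: (z ++ [true])).map not) := by
            simpa using hcon
          exact isFactor_negw_iff.1 hmap
    · -- 1z0 is not a factor : apply the final contradiction directly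
      exact final_contradiction hc hpal h00 h11 h10


end StringBricks
end

section
/- Let α ∈ (0,1) be irrational and let c_α be the characteristic word of slope α. Then there exist infinitely many n ≥ 0 such that for some coprime integers p, q ≥ 1 with p + q = n + 2, the finite word b·c_α(0)·c_α(1)···c_α(n−1)·a (the prefix of c_α of length n, preceded by the letter b and followed by the letter a) equals the Christoffel word C(p,q). In other words, a characteristic word admits an infinite sequence of prefixes w₁, w₂, … such that each b·wᵢ·a is a Christoffel word. -/
/-!
STATEMENT 12: Let `α ∈ (0,1)` be irrational and `c_α` the characteristic word
of slope `α` (`a = false`, `b = true`). Then there are infinitely many `n ≥ 0`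
such that, for some coprime `p, q ≥ 1` with `p + q = n + 2`, the word
`b·(prefix of c_α of length n)·a` equals the Christoffel word `C(p,q)`.
-/

namespace StringBricks

set_option maxHeartbeats 2000000

lemma fract_near_one (α : ℝ) (hirr : Irrational α) {ε : ℝ} (hε : 0 < ε) :
    ∃ K : ℕ, 1 ≤ K ∧ 1 - ε < Int.fract ((K : ℝ) * α) := by
  set ε' : ℝ := min ε 1 with hε'def
  have hε'0 : 0 < ε' := lt_min hε one_pos
  have hε'1 : ε' ≤ 1 := min_le_right _ _
  have hε'ε : ε' ≤ ε := min_le_left _ _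
  have hdense : Dense ((AddSubgroup.closure {(1 : ℝ), α} : AddSubgroup ℝ) : Set ℝ) := by
    rcases AddSubgroup.dense_or_cyclic (AddSubgroup.closure {(1 : ℝ), α}) with h | ⟨a, ha⟩
    · exact h
    · exfalso
      have h1 : (1 : ℝ) ∈ AddSubgroup.closure {(1 : ℝ), α} :=
        AddSubgroup.subset_closure (by simp)
      have hα : α ∈ AddSubgroup.closure {(1 : ℝ), α} :=
        AddSubgroup.subset_closure (by simp)
      rw [ha, AddSubgroup.mem_closure_singleton] at h1 hα
      obtain ⟨n, hn⟩ := h1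
      obtain ⟨m, hm⟩ := hα
      rw [zsmul_eq_mul] at hn hm
      have hnz : n ≠ 0 := by
        intro h; rw [h] at hn; simp at hn
      have hn0 : (n : ℝ) ≠ 0 := Int.cast_ne_zero.mpr hnz
      have key : α * (n : ℝ) = (m : ℝ) := by
        linear_combination (m : ℝ) * hn - (n : ℝ) * hm
      have hα' : α = (m : ℝ) / n := (eq_div_iff hn0).mpr key
      exact hirr ⟨(m : ℚ) / (n : ℚ), by push_cast; rw [hα']⟩
  obtain ⟨g, hgS, hg⟩ := hdense.exists_between (show 1 - ε' < 1 by linarith)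
  rw [SetLike.mem_coe, AddSubgroup.mem_closure_pair] at hgS
  obtain ⟨m, k, hmk⟩ := hgS
  simp only [zsmul_eq_mul, mul_one] at hmk
  have hglb : 1 - ε' < g := hg.1
  have hg0 : 0 < g := by linarith
  have hg1 : g < 1 := hg.2
  have hk0 : k ≠ 0 := by
    intro h; rw [h] at hmk; simp at hmk
    rw [← hmk] at hg0 hg1
    have h1 : (0:ℤ) < m := by exact_mod_cast hg0
    have h2 : (m:ℤ) < 1 := by exact_mod_cast hg1
    omega
  rcases lt_or_gt_of_ne hk0 with hkneg | hkpos
  · -- k < 0 : fract(K₀ α) = 1 - g is small; climb by multiples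
    set K₀ : ℕ := (-k).toNat with hK₀
    have hK₀cast : ((K₀ : ℕ) : ℝ) = -(k : ℝ) := by
      have : ((-k).toNat : ℤ) = -k := Int.toNat_of_nonneg (by omega)
      exact_mod_cast congrArg (fun z : ℤ => (z : ℝ)) this
    have hK₀pos : 1 ≤ K₀ := by omega
    set δ : ℝ := 1 - g with hδdef
    have hδ0 : 0 < δ := by simp [hδdef]; linarith
    have hδε : δ < ε' := by simp only [hδdef]; linarith
    have hfr : (K₀ : ℝ) * α = ((m - 1 : ℤ) : ℝ) + δ := by
      rw [hK₀cast]; push_cast; linarith [hmk]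
    obtain ⟨j, hj1, hj2⟩ : ∃ j : ℕ, 1 - ε' < (j : ℝ) * δ ∧ (j : ℝ) * δ < 1 := by
      refine ⟨⌊(1 - ε') / δ⌋₊ + 1, ?_, ?_⟩
      · have := Nat.lt_floor_add_one ((1 - ε') / δ)
        rw [div_lt_iff₀ hδ0] at this
        calc 1 - ε' < ((⌊(1 - ε') / δ⌋₊ : ℝ) + 1) * δ := this
          _ = ((⌊(1 - ε') / δ⌋₊ + 1 : ℕ) : ℝ) * δ := by push_cast; ring
      · have h0 : (0:ℝ) ≤ (1 - ε') / δ := div_nonneg (by linarith) hδ0.le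
        have hfl := Nat.floor_le h0
        have h3 := mul_le_mul_of_nonneg_right hfl hδ0.le
        rw [div_mul_cancel₀ _ hδ0.ne'] at h3
        push_cast
        nlinarith
    have hjpos : j ≠ 0 := by
      rintro rfl; simp at hj1; linarith
    refine ⟨j * K₀, Nat.one_le_iff_ne_zero.mpr (Nat.mul_ne_zero hjpos (by omega)), ?_⟩
    have hcast : ((j * K₀ : ℕ) : ℝ) * α = ((j * (m - 1) : ℤ) : ℝ) + (j : ℝ) * δ := by
      calc ((j * K₀ : ℕ) : ℝ) * α = (j : ℝ) * ((K₀ : ℝ) * α) := by push_cast; ring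
        _ = (j : ℝ) * (((m - 1 : ℤ) : ℝ) + δ) := by rw [hfr]
        _ = ((j * (m - 1) : ℤ) : ℝ) + (j : ℝ) * δ := by push_cast; ring
    rw [hcast, Int.fract_intCast_add, Int.fract_eq_self.mpr ⟨by positivity, hj2⟩]
    linarith
  · refine ⟨k.toNat, by omega, ?_⟩
    have hKcast : ((k.toNat : ℕ) : ℝ) = (k : ℝ) := by
      have : (k.toNat : ℤ) = k := Int.toNat_of_nonneg (by omega)
      exact_mod_cast congrArg (fun z : ℤ => (z : ℝ)) this
    have hk : ((k.toNat : ℕ) : ℝ) * α = ((-m : ℤ) : ℝ) + g := by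
      rw [hKcast]; push_cast; linarith [hmk]
    rw [hk, Int.fract_intCast_add, Int.fract_eq_self.mpr ⟨hg0.le, hg1⟩]
    linarith

lemma record_exists(α : ℝ) (hirr : Irrational α) (M : ℕ) :
    ∃ N : ℕ, M < N ∧ ∀ m : ℕ, 1 ≤ m → m < N →
      (m : ℝ) * (1 - Int.fract ((N : ℝ) * α)) < (N : ℝ) * (1 - Int.fract ((m : ℝ) * α)) := by
  classical
  set f : ℕ → ℝ := fun m => (1 - Int.fract ((m : ℝ) * α)) / m with hf
  have hfpos : ∀ m : ℕ, 1 ≤ m → 0 < f m := by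
    intro m hm
    have hm0 : (0:ℝ) < m := by exact_mod_cast hm
    have := Int.fract_lt_one ((m : ℝ) * α)
    exact div_pos (by linarith) hm0
  set M' := M + 1 with hM'
  have hne : (Finset.Icc 1 M').Nonempty := ⟨1, by simp [hM']⟩
  set c : ℝ := (Finset.Icc 1 M').inf' hne f with hc
  have hcpos : 0 < c := by
    rw [hc, Finset.lt_inf'_iff]
    intro m hm
    exact hfpos m (Finset.mem_Icc.mp hm).1
  obtain ⟨K, hK1, hKf⟩ := fract_near_one α hirr hcpos
  have hPK : f K < c := by
    have hK0 : (1:ℝ) ≤ K := by exact_mod_cast hK1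
    have hx : (0:ℝ) ≤ 1 - Int.fract ((K:ℝ) * α) := by
      have := Int.fract_lt_one ((K : ℝ) * α); linarith
    have h2 : f K ≤ 1 - Int.fract ((K:ℝ) * α) := div_le_self hx hK0
    linarith
  have hex : ∃ n : ℕ, 1 ≤ n ∧ f n < c := ⟨K, hK1, hPK⟩
  set N := Nat.find hex with hN
  obtain ⟨hN1, hNf⟩ := Nat.find_spec hex
  have hNM : M < N := by
    by_contra h
    push_neg at h
    have : c ≤ f N := by
      rw [hc]
      exact Finset.inf'_le f (Finset.mem_Icc.mpr ⟨hN1, by omega⟩)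
    linarith
  refine ⟨N, hNM, ?_⟩
  intro m hm1 hmN
  have hfm : c ≤ f m := by
    by_contra h
    push_neg at h
    exact Nat.find_min hex (show m < Nat.find hex from hN ▸ hmN) ⟨hm1, h⟩
  have hlt : f N < f m := by linarith
  rw [hf] at hlt
  have hm0 : (0:ℝ) < m := by exact_mod_cast hm1
  have hN0 : (0:ℝ) < N := by exact_mod_cast hN1
  rw [div_lt_div_iff₀ hN0 hm0] at hlt
  linarith

lemma div_formula {N R m a : ℕ} (hRN : R ≤ N) (h1 : N * a < m * R)
    (h2 : m * R ≤ N * (a + 1)) (ham : a + 1 ≤ m) :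
    m * (N - R) / N = m - a - 1 := by
  obtain ⟨b, rfl⟩ : ∃ b, m = b + (a + 1) := ⟨m - a - 1, by omega⟩
  have hgoal : b + (a + 1) - a - 1 = b := by omega
  rw [hgoal]
  have hu : (b + (a + 1)) * (N - R) + (b + (a + 1)) * R = (b + (a + 1)) * N := by
    rw [← Nat.mul_add, Nat.sub_add_cancel hRN]
  apply Nat.div_eq_of_lt_le
  · have e1 : (b + (a + 1)) * N = b * N + (a + 1) * N := by ring
    have e2 : N * (a + 1) = (a + 1) * N := by ring
    linarith
  · have e1 : (b + (a + 1)) * N = b * N + a * N + N := by ring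
    have e2 : N * a = a * N := by ring
    have e3 : (b + 1) * N = b * N + N := by ring
    linarith

noncomputable def charWord (α : ℝ) : ℕ → Bool :=
  fun n => decide (⌊((n : ℝ) + 2) * α⌋ - ⌊((n : ℝ) + 1) * α⌋ = 1)

/-- The prefix of length `n` of a right-infinite word. -/
def wordPrefix (w : ℕ → Bool) (n : ℕ) : List Bool :=
  (List.range n).map w

/-- The Christoffel word of slope `p/q` (for coprime `p, q ≥ 1`): the word of
length `p+q` whose `i`-th letter (`1 ≤ i ≤ p+q`, here `j = i - 1`) is
`a (= false)` if `⌊ip/(p+q)⌋ > ⌊(i−1)p/(p+q)⌋` and `b (= true)` otherwise. -/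
def christoffel (p q : ℕ) : List Bool :=
  (List.range (p + q)).map fun j =>
    if j * p / (p + q) < (j + 1) * p / (p + q) then false else true

theorem characteristic_has_infinitely_many_christoffel_prefixes
    (α : ℝ) (hirr : Irrational α) (h0 : 0 < α) (h1 : α < 1) :
    ∀ N : ℕ, ∃ n : ℕ, N ≤ n ∧ ∃ p q : ℕ, 1 ≤ p ∧ 1 ≤ q ∧ Nat.Coprime p q ∧
      p + q = n + 2 ∧
      true :: (wordPrefix (charWord α) n ++ [false]) = christoffel p q := by
  intro M0
  have h1α : (0:ℝ) < 1 - α := by linarith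
  obtain ⟨N, hNM, hrec⟩ := record_exists α hirr (max (M0 + 2) (⌈1/(1-α)⌉₊ + 2))
  have hNM0 : M0 + 2 < N := lt_of_le_of_lt (le_max_left _ _) hNM
  have hNceil : ⌈1/(1-α)⌉₊ + 2 < N := lt_of_le_of_lt (le_max_right _ _) hNM
  have hN1 : 1 ≤ N := by omega
  have hN0R : (0:ℝ) < N := by exact_mod_cast hN1
  have hApos : ∀ m : ℕ, (0:ℤ) ≤ ⌊(m:ℝ)*α⌋ := fun m => Int.floor_nonneg.mpr (by positivity)
  have hfrd : ∀ x : ℝ, Int.fract x = x - (⌊x⌋:ℝ) := fun x => rfl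
  have hirrm : ∀ m : ℕ, 1 ≤ m → (⌊(m:ℝ)*α⌋ : ℝ) < (m:ℝ)*α := by
    intro m hm
    refine lt_of_le_of_ne (Int.floor_le _) fun h => ?_
    exact (hirr.natCast_mul (by omega : m ≠ 0)).ne_int _ h.symm
  set R : ℕ := (⌊(N:ℝ)*α⌋).toNat + 1 with hRdef
  have hRcast : (R : ℤ) = ⌊(N:ℝ)*α⌋ + 1 := by
    rw [hRdef]; push_cast [Int.toNat_of_nonneg (hApos N)]; ring
  have hRcastR : (R : ℝ) = (⌊(N:ℝ)*α⌋ : ℝ) + 1 := by exact_mod_cast hRcast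
  have hNαR : (N:ℝ)*α < R := by rw [hRcastR]; exact Int.lt_floor_add_one _
  have hRαN : (⌊(N:ℝ)*α⌋:ℝ) < (N:ℝ)*α := hirrm N hN1
  -- R < N
  have hceil : 1/(1-α) < (N:ℝ) := by
    have h' : (⌈1/(1-α)⌉₊ : ℝ) < N := by exact_mod_cast (by omega : ⌈1/(1-α)⌉₊ < N)
    linarith [Nat.le_ceil (1/(1-α))]
  have hNα : (N:ℝ)*α < (N:ℝ) - 1 := by
    rw [div_lt_iff₀ h1α] at hceil
    nlinarith
  have hRN : R + 1 ≤ N := by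
    have hq : (R:ℝ) < (N:ℝ) := by linarith
    have : R < N := by exact_mod_cast hq
    omega
  set p : ℕ := N - R with hpdef
  set q : ℕ := R with hqdef
  have hp1 : 1 ≤ p := by omega
  have hq1 : 1 ≤ q := by omega
  have hpq : p + q = N := by omega
  -- the two-sided inequality (†)
  have hdag : ∀ m : ℕ, 1 ≤ m → m < N →
      (N:ℤ) * ⌊(m:ℝ)*α⌋ < m * R ∧ (m:ℤ) * R < N * (⌊(m:ℝ)*α⌋ + 1) := by
    intro m hm hmN
    have hrecm := hrec m hm hmN
    rw [hfrd, hfrd] at hrecm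
    have hm0 : (0:ℝ) < m := by exact_mod_cast hm
    constructor
    · have key : (N:ℝ) * (⌊(m:ℝ)*α⌋:ℝ) < (m:ℝ) * R := by
        calc (N:ℝ) * (⌊(m:ℝ)*α⌋:ℝ) < (N:ℝ) * ((m:ℝ)*α) :=
              mul_lt_mul_of_pos_left (hirrm m hm) hN0R
          _ = (m:ℝ) * ((N:ℝ)*α) := by ring
          _ < (m:ℝ) * R := mul_lt_mul_of_pos_left hNαR hm0
      exact_mod_cast key
    · have key : (m:ℝ) * R < (N:ℝ) * ((⌊(m:ℝ)*α⌋:ℝ) + 1) := by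
        rw [hRcastR]; nlinarith [hrecm]
      exact_mod_cast key
  -- coprimality of R and N
  have hcop : Nat.Coprime R N := by
    by_contra hnc
    have hdN : Nat.gcd R N ∣ N := Nat.gcd_dvd_right _ _
    have hdR : Nat.gcd R N ∣ R := Nat.gcd_dvd_left _ _
    set d := Nat.gcd R N with hd
    have hdne : d ≠ 0 := by
      intro h; rw [hd] at h
      have := Nat.eq_zero_of_gcd_eq_zero_right h; omega
    have hd2 : 2 ≤ d := by
      have h1 : d ≠ 1 := by
        intro h
        exact hnc (show Nat.gcd R N = 1 by omega)
      omega
    obtain ⟨N', hN'⟩ := hdN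
    obtain ⟨R', hR'⟩ := hdR
    have hN'1 : 1 ≤ N' := by
      rcases Nat.eq_zero_or_pos N' with h | h
      · rw [h, Nat.mul_zero] at hN'; omega
      · exact h
    have hN'N : N' < N := by
      have : 2 * N' ≤ d * N' := Nat.mul_le_mul_right _ hd2
      omega
    have hkey := hrec N' hN'1 hN'N
    rw [hfrd, hfrd] at hkey
    have hdR0 : (0:ℝ) < d := by exact_mod_cast (by omega : 0 < d)
    have hNe : (N:ℝ) = (d:ℝ) * N' := by exact_mod_cast congrArg (Nat.cast : ℕ → ℝ) hN'
    have hRe : (R:ℝ) = (d:ℝ) * R' := by exact_mod_cast congrArg (Nat.cast : ℕ → ℝ) hR'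
    have hfl : (⌊(N':ℝ)*α⌋:ℝ) + 1 ≤ (R':ℝ) := by
      have h' : (N':ℝ)*α < R' := by
        have hh : ((N':ℝ)*α) * d < (R':ℝ) * d := by
          calc ((N':ℝ)*α) * d = (N:ℝ)*α := by rw [hNe]; ring
            _ < R := hNαR
            _ = (R':ℝ) * d := by rw [hRe]; ring
        exact lt_of_mul_lt_mul_right hh hdR0.le
      have hfl' : ⌊(N':ℝ)*α⌋ < (R' : ℤ) := Int.floor_lt.mpr (by exact_mod_cast h')
      have : ⌊(N':ℝ)*α⌋ + 1 ≤ (R' : ℤ) := hfl'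
      exact_mod_cast this
    -- N * (1 - fract(N'α)) ≤ N' * (1 - fract(Nα)), contradicting hkey
    have hcontra : (N:ℝ) * ((N':ℝ)*α - ⌊(N':ℝ)*α⌋) ≥ (N':ℝ) * ((N:ℝ)*α - ⌊(N:ℝ)*α⌋) := by
      nlinarith [hfl, hRcastR, hNe, hRe, hN0R]
    nlinarith [hkey, hcontra]
  -- natural-number versions of the inequalities
  have hAm1 : ∀ m : ℕ, 1 ≤ m → (⌊(m:ℝ)*α⌋).toNat + 1 ≤ m := by
    intro m hm
    have hlt : ⌊(m:ℝ)*α⌋ < (m:ℤ) := Int.floor_lt.mpr (by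
      have hm0 : (0:ℝ) < m := by exact_mod_cast hm
      push_cast; nlinarith)
    have h2 := hApos m
    omega
  have hdagN : ∀ m : ℕ, 1 ≤ m → m < N →
      N * (⌊(m:ℝ)*α⌋).toNat < m * R ∧ m * R ≤ N * ((⌊(m:ℝ)*α⌋).toNat + 1) := by
    intro m hm hmN
    obtain ⟨hl, hr⟩ := hdag m hm hmN
    have ht : ((⌊(m:ℝ)*α⌋).toNat : ℤ) = ⌊(m:ℝ)*α⌋ := Int.toNat_of_nonneg (hApos m)
    constructor
    · have hcast : (N:ℤ) * ((⌊(m:ℝ)*α⌋).toNat : ℤ) < m * R := by rw [ht]; exact hl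
      exact_mod_cast hcast
    · have hcast : (m:ℤ) * R ≤ N * (((⌊(m:ℝ)*α⌋).toNat : ℤ) + 1) := by rw [ht]; exact hr.le
      exact_mod_cast hcast
  have hdiv : ∀ m : ℕ, 1 ≤ m → m < N →
      m * p / N = m - (⌊(m:ℝ)*α⌋).toNat - 1 := by
    intro m hm hmN
    obtain ⟨hl, hr⟩ := hdagN m hm hmN
    exact div_formula (by omega) hl hr (hAm1 m hm)
  refine ⟨N - 2, by omega, p, q, hp1, hq1, ?_, by omega, ?_⟩
  · -- Coprime p q
    have hc1 : Nat.gcd R N = 1 := hcop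
    have hdvdN : Nat.gcd p q ∣ N := by
      rw [← hpq]; exact Nat.dvd_add (Nat.gcd_dvd_left p q) (Nat.gcd_dvd_right p q)
    have h := Nat.dvd_gcd (Nat.gcd_dvd_right p q) hdvdN
    rw [hc1] at h
    exact Nat.dvd_one.mp h
  · -- the word equality
    have hchr : christoffel p q = (List.range N).map
        (fun j => if j * p / N < (j + 1) * p / N then false else true) := by
      rw [christoffel, hpq]
    rw [hchr]
    apply List.ext_getElem
    · simp [wordPrefix]
      omega
    intro i h₁ h₂
    have hiN : i < N := by simpa using h₂
    simp only [List.getElem_map, List.getElem_range]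
    match i, hiN with
    | 0, _ =>
      have hp0 : p / N = 0 := Nat.div_eq_of_lt (by omega)
      simp [hp0]
    | Nat.succ j, hiN =>
      rw [List.getElem_cons_succ]
      have hlen : (wordPrefix (charWord α) (N - 2)).length = N - 2 := by
        simp [wordPrefix]
      by_cases hjn : j < N - 2
      · -- middle letters
        rw [List.getElem_append_left (by rw [hlen]; omega)]
        simp only [wordPrefix, List.getElem_map, List.getElem_range]
        have h1m : 1 ≤ j + 1 := by omega
        have hmN' : j + 1 < N := by omega
        have hm1N : j + 1 + 1 < N := by omega
        have e1 := hdiv (j+1) h1m hmN'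
        have e2 := hdiv (j+1+1) (by omega) hm1N
        rw [e1, e2]
        set x := (⌊((j+1:ℕ):ℝ)*α⌋).toNat with hxdef
        set y := (⌊((j+1+1:ℕ):ℝ)*α⌋).toNat with hydef
        have hx := hAm1 (j+1) h1m
        have hy := hAm1 (j+1+1) (by omega)
        have hmono : x ≤ y := by
          have hf : ⌊((j+1:ℕ):ℝ)*α⌋ ≤ ⌊((j+1+1:ℕ):ℝ)*α⌋ :=
            Int.floor_le_floor (by push_cast; nlinarith)
          rw [hxdef, hydef]
          exact Int.toNat_le_toNat hf
        have hstep : y ≤ x + 1 := by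
          have h' : ⌊((j+1+1:ℕ):ℝ)*α⌋ ≤ ⌊((j+1:ℕ):ℝ)*α⌋ + 1 := by
            have hc : ⌊((j+1:ℕ):ℝ)*α + 1⌋ = ⌊((j+1:ℕ):ℝ)*α⌋ + 1 := by
              exact_mod_cast Int.floor_add_intCast (((j+1:ℕ):ℝ)*α) 1
            calc ⌊((j+1+1:ℕ):ℝ)*α⌋ ≤ ⌊((j+1:ℕ):ℝ)*α + 1⌋ :=
                  Int.floor_le_floor (by push_cast; nlinarith)
              _ = ⌊((j+1:ℕ):ℝ)*α⌋ + 1 := hc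
          have h2 := hApos (j+1)
          have h3 := hApos (j+1+1)
          omega
        have hfx : ⌊((j:ℝ)+1)*α⌋ = (x:ℤ) := by
          rw [show ((j:ℝ)+1) = ((j+1:ℕ):ℝ) by push_cast; ring, hxdef,
            Int.toNat_of_nonneg (hApos (j+1))]
        have hfy : ⌊((j:ℝ)+2)*α⌋ = (y:ℤ) := by
          rw [show ((j:ℝ)+2) = ((j+1+1:ℕ):ℝ) by push_cast; ring, hydef,
            Int.toNat_of_nonneg (hApos (j+1+1))]
        simp only [charWord, hfx, hfy]
        by_cases hyx : y = x + 1
        · rw [if_neg (by omega)]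
          simp [show (y:ℤ) - (x:ℤ) = 1 by omega]
        · rw [if_pos (by omega)]
          simp [show ¬((y:ℤ) - (x:ℤ) = 1) by omega]
      · -- last letter
        have hj : j = N - 2 := by omega
        rw [List.getElem_append_right (by rw [hlen]; omega)]
        rw [List.getElem_singleton]
        simp only [Nat.succ_eq_add_one]
        have hNp : (j + 1 + 1) * p / N = p := by
          rw [show j + 1 + 1 = N by omega]
          exact Nat.mul_div_cancel_left p (by omega)
        have hlt : (j + 1) * p / N < p := by
          rw [Nat.div_lt_iff_lt_mul (by omega : 0 < N)]
          calc (j + 1) * p < N * p := by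
                apply Nat.mul_lt_mul_of_lt_of_le (by omega) (le_refl p) (by omega)
            _ = p * N := Nat.mul_comm N p
        rw [if_pos (by rw [hNp]; exact hlt)]


end StringBricks
end

section
/- Let p, q ≥ 1 be coprime integers. Then the Christoffel word C(p,q) begins with the letter b and ends with the letter a, and writing C(p,q) = b·u·a with u the middle word of length p+q−2, there exists a right-infinite Sturmian word w : ℕ → {a,b} having u as a prefix. -/
/-!
STATEMENT 13: For coprime `p, q ≥ 1`, the Christoffel word `C(p,q)` begins
with `b = true` and ends with `a = false`, and writing `C(p,q) = b·u·a` there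
is a right-infinite Sturmian word having `u` as a prefix.
-/

namespace StringBricks

/-- `u` is a prefix of the right-infinite word `w`. -/
def IsPrefixOf (u : List Bool) (w : ℕ → Bool) : Prop :=
  ∀ j : Fin u.length, w j = u.get j

noncomputable def gfl (α : ℝ) (n : ℕ) : ℤ := ⌊((n:ℝ)+1)*α⌋

noncomputable def mw (α : ℝ) (n : ℕ) : Bool := if gfl α n < gfl α (n+1) then false else true

lemma gfl_succ (α : ℝ) (n : ℕ) : gfl α (n+1) = ⌊(((n:ℝ)+1)*α + α)⌋ := by
  unfold gfl; push_cast; ring_nf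

lemma step_lb (α : ℝ) (h0 : 0 ≤ α) (n : ℕ) : gfl α n ≤ gfl α (n+1) := by
  rw [gfl_succ]; exact Int.floor_le_floor (by linarith)

lemma step_ub (α : ℝ) (h1 : α < 1) (n : ℕ) : gfl α (n+1) ≤ gfl α n + 1 := by
  rw [gfl_succ]
  have : (((n:ℝ)+1)*α + α) ≤ (((n:ℝ)+1)*α + 1) := by linarith
  calc ⌊(((n:ℝ)+1)*α + α)⌋ ≤ ⌊(((n:ℝ)+1)*α + 1)⌋ := Int.floor_le_floor this
    _ = gfl α n + 1 := by rw [Int.floor_add_one]; rfl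

lemma count_window (α : ℝ) (h0 : 0 ≤ α) (h1 : α < 1) (i L : ℕ) :
    (((List.range L).map (fun j => mw α (i+j))).count true : ℤ)
      = L - (gfl α (i+L) - gfl α i) := by
  induction L with
  | zero => simp
  | succ L ih =>
    rw [List.range_succ, List.map_append, List.count_append]
    have hadd : i + (L+1) = (i+L)+1 := by omega
    rw [hadd]
    by_cases h : gfl α (i+L) < gfl α ((i+L)+1)
    · have he : gfl α ((i+L)+1) = gfl α (i+L) + 1 :=
        le_antisymm (step_ub α h1 _) (by omega)
    
      have hm : mw α (i+L) = false := by simp [mw, h]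
      simp only [List.map_cons, List.map_nil, hm, List.count_cons, List.count_nil]
      push_cast
      rw [ih, he]
      push_cast
      norm_num
      ring
    · have he : gfl α ((i+L)+1) = gfl α (i+L) :=
        le_antisymm (by omega) (step_lb α h0 _)
      have hm : mw α (i+L) = true := by simp [mw, h]
      simp only [List.map_cons, List.map_nil, hm, List.count_cons, List.count_nil]
      push_cast
      rw [ih, he]
      push_cast
      norm_num
      ring

lemma factor_eq (w : ℕ → Bool) (u : List Bool) (i : ℕ)
    (h : ∀ j : Fin u.length, w (i + j) = u.get j) :
    u = (List.range u.length).map (fun j => w (i+j)) := by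
  apply List.ext_get (by simp)
  intro n h1 h2
  have := h ⟨n, h1⟩
  simp only [List.get_eq_getElem] at this ⊢
  simp [← this]

lemma window_bounds (α : ℝ) (i L : ℕ) :
    ⌊(L:ℝ)*α⌋ ≤ gfl α (i+L) - gfl α i ∧ gfl α (i+L) - gfl α i ≤ ⌊(L:ℝ)*α⌋ + 1 := by
  have hg : gfl α (i+L) = ⌊(((i:ℝ)+1)*α + (L:ℝ)*α)⌋ := by
    unfold gfl; push_cast; ring_nf
  have h1 := Int.le_floor_add (((i:ℝ)+1)*α) ((L:ℝ)*α)
  have h2 := Int.le_floor_add_floor (((i:ℝ)+1)*α) ((L:ℝ)*α)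
  rw [hg]; unfold gfl
  omega

lemma balanced_mw (α : ℝ) (h0 : 0 ≤ α) (h1 : α < 1) : BalancedWord (mw α) := by
  rintro u v ⟨i, hi⟩ ⟨j, hj⟩ hlen
  have cu : (u.count true : ℤ) = u.length - (gfl α (i+u.length) - gfl α i) := by
    conv_lhs => rw [factor_eq _ u i hi]
    rw [count_window α h0 h1]
  have cv : (v.count true : ℤ) = v.length - (gfl α (j+v.length) - gfl α j) := by
    conv_lhs => rw [factor_eq _ v j hj]
    rw [count_window α h0 h1]
  obtain ⟨b1, b2⟩ := window_bounds α i u.length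
  obtain ⟨b3, b4⟩ := window_bounds α j v.length
  rw [hlen] at b1 b2
  rw [abs_le]
  constructor <;>
    · rw [cu, cv, hlen]; push_cast; omega

lemma mw_true_iff (α : ℝ) (h0 : 0 ≤ α) (h1 : α < 1) (n : ℕ) :
    gfl α (n+1) = gfl α n + (if mw α n = true then 0 else 1) := by
  unfold mw
  by_cases h : gfl α n < gfl α (n+1)
  · have := step_ub α h1 n
    simp [h]; omega
  · have := step_lb α h0 n
    simp [h]; omega

lemma aperiodic_mw (α : ℝ) (h0 : 0 ≤ α) (h1 : α < 1) (hirr : Irrational α) :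
    ¬ EventuallyPeriodic (mw α) := by
  rintro ⟨N, P, hP, hper⟩
  -- difference is eventually constant
  have hc : ∀ n, N ≤ n → gfl α (n+P) - gfl α n = gfl α (N+P) - gfl α N := by
    intro n hn
    induction n, hn using Nat.le_induction with
    | base => rfl
    | succ n hn ih =>
      have e1 := mw_true_iff α h0 h1 (n+P)
      have e2 := mw_true_iff α h0 h1 n
      rw [hper n hn] at e1
      have : n + P + 1 = (n+1) + P := by omega
      rw [this] at e1
      omega
  set c : ℤ := gfl α (N+P) - gfl α N with hcdef
  have hk : ∀ k : ℕ, gfl α (N + k*P) = gfl α N + k * c := by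
    intro k
    induction k with
    | zero => simp
    | succ k ih =>
      have h' := hc (N + k*P) (by omega)
      have : N + (k+1)*P = (N + k*P) + P := by ring
      rw [this]
      push_cast
      linear_combination h' + ih
  -- floor bounds give |k*(P*α - c)| < 1 for all k
  have hb : ∀ k : ℕ, |(k:ℝ) * ((P:ℝ)*α - c)| < 1 := by
    intro k
    have g1 : ((N:ℝ) + (k*P:ℕ) + 1)*α - 1 < (gfl α (N + k*P) : ℝ) ∧
        (gfl α (N + k*P) : ℝ) ≤ ((N:ℝ) + (k*P:ℕ) + 1)*α := by
      unfold gfl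
      constructor
      · have := Int.sub_one_lt_floor (((N + k*P:ℕ):ℝ)+1 : ℝ)
        push_cast
        have := Int.sub_one_lt_floor ((((N:ℝ) + (k*P:ℕ)) + 1)*α)
        push_cast at this
        linarith
      · have := Int.floor_le ((((N + k*P:ℕ):ℝ)+1)*α)
        push_cast at this ⊢
        linarith
    have g2 : ((N:ℝ) + 1)*α - 1 < (gfl α N : ℝ) ∧ (gfl α N : ℝ) ≤ ((N:ℝ)+1)*α := by
      unfold gfl
      exact ⟨by simpa using Int.sub_one_lt_floor (((N:ℝ)+1)*α), Int.floor_le _⟩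
    have hk' : (gfl α (N + k*P) : ℝ) = (gfl α N : ℝ) + (k:ℝ) * (c:ℝ) := by
      rw [hk k]; push_cast; ring
    rw [abs_lt]
    have hc1 : ((k*P : ℕ):ℝ) = (k:ℝ)*(P:ℝ) := by push_cast; ring
    constructor <;> nlinarith [g1.1, g1.2, g2.1, g2.2]
  -- hence P*α = c
  have heq : (P:ℝ)*α = (c:ℝ) := by
    by_contra hne
    have hpos : 0 < |(P:ℝ)*α - c| := abs_pos.mpr (sub_ne_zero.mpr hne)
    obtain ⟨k, hk'⟩ := exists_nat_gt (1 / |(P:ℝ)*α - c|)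
    have h1k : 1 < (k:ℝ) * |(P:ℝ)*α - c| := by
      rw [div_lt_iff₀ hpos] at hk'
      linarith
    have := hb k
    rw [abs_mul, abs_of_nonneg (by positivity : (0:ℝ) ≤ (k:ℝ))] at this
    linarith
  -- contradiction with irrationality
  have hPne : (P:ℝ) ≠ 0 := by positivity
  apply hirr
  refine ⟨(c : ℚ) / (P : ℚ), ?_⟩
  have : α = (c:ℝ) / (P:ℝ) := by field_simp at heq ⊢; linarith [heq]
  rw [this]
  push_cast
  ring

theorem christoffel_middle_prefix_of_sturmian (p q : ℕ)
    (hp : 1 ≤ p) (hq : 1 ≤ q) (hco : Nat.Coprime p q) :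
    ∃ u : List Bool, christoffel p q = true :: (u ++ [false]) ∧
      ∃ w : ℕ → Bool, SturmianWord w ∧ IsPrefixOf u w := by
  have hn2 : 2 ≤ p + q := by omega
  set nR : ℝ := ((p + q : ℕ) : ℝ) with hnR
  have hnpos : (0:ℝ) < nR := by rw [hnR]; positivity
  have hnge2 : (2:ℝ) ≤ nR := by rw [hnR]; exact_mod_cast hn2
  have hs0 : 0 < Real.sqrt 2 := Real.sqrt_pos.mpr (by norm_num)
  have hs2 : Real.sqrt 2 < 2 := by
    nlinarith [Real.sq_sqrt (by norm_num : (0:ℝ) ≤ 2), Real.sqrt_nonneg 2]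
  set ε : ℝ := Real.sqrt 2 / (2 * nR ^ 2) with hε
  set α : ℝ := (p:ℝ) / nR + ε with hα
  have hε0 : 0 < ε := by rw [hε]; positivity
  have h0 : 0 ≤ α := by rw [hα]; positivity
  have hαmul : α * (2 * nR ^ 2) = 2 * nR * (p:ℝ) + Real.sqrt 2 := by
    rw [hα, hε]; field_simp
  have hpltn : (p:ℝ) + 1 ≤ nR := by
    rw [hnR]; push_cast
    have : (1:ℝ) ≤ (q:ℝ) := by exact_mod_cast hq
    linarith
  have h1 : α < 1 := by
    have key : α * (2 * nR ^ 2) < 1 * (2 * nR ^ 2) := by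
      rw [hαmul]; nlinarith
    exact lt_of_mul_lt_mul_right key (by positivity)
  have hirr : Irrational α := by
    have hεirr : Irrational ε := by
      have h2 : (2 * nR ^ 2) = ((2 * (p+q)^2 : ℕ) : ℝ) := by rw [hnR]; push_cast; ring
      rw [hε, h2]
      exact irrational_sqrt_two.div_natCast (by positivity)
    have hcast : (p:ℝ) / nR = (((p:ℚ) / ((p+q:ℕ):ℚ) : ℚ) : ℝ) := by
      rw [hnR]; push_cast; ring
    rw [hα, hcast]
    exact hεirr.ratCast_add _
  have hcop : Nat.Coprime (p + q) p := by
    rw [Nat.add_comm, Nat.coprime_add_self_left]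
    exact hco.symm
  -- the key floor computation
  have hfloor : ∀ k : ℕ, 1 ≤ k → k ≤ p + q - 1 → ⌊(k:ℝ) * α⌋ = (k * p / (p + q) : ℕ) := by
    intro k hk1 hk2
    set d : ℕ := k * p / (p + q) with hd
    set m : ℕ := k * p % (p + q) with hm
    have hdm : (p + q) * d + m = k * p := Nat.div_add_mod (k * p) (p + q)
    have hm0 : 1 ≤ m := by
      rcases Nat.eq_zero_or_pos m with h | h
      · exfalso
        have hdvd : (p + q) ∣ k * p := Nat.dvd_of_mod_eq_zero h
        have : (p + q) ∣ k := hcop.dvd_of_dvd_mul_right hdvd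
        have := Nat.le_of_dvd (by omega) this
        omega
      · exact h
    have hmlt : m ≤ p + q - 1 := by
      have := Nat.mod_lt (k * p) (show 0 < p + q by omega)
      omega
    -- cast facts
    have hdmR : nR * (d:ℝ) + (m:ℝ) = (k:ℝ) * (p:ℝ) := by
      rw [hnR]; exact_mod_cast hdm
    have hkR : (k:ℝ) ≤ nR - 1 := by
      rw [hnR]
      have : (k:ℝ) ≤ ((p+q-1 : ℕ):ℝ) := by exact_mod_cast hk2
      rw [Nat.cast_sub (by omega : 1 ≤ p + q)] at this
      push_cast at this ⊢
      linarith
    have hmR1 : (1:ℝ) ≤ (m:ℝ) := by exact_mod_cast hm0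
    have hmR2 : (m:ℝ) ≤ nR - 1 := by
      rw [hnR]
      have : ((m:ℕ):ℝ) ≤ ((p+q-1 : ℕ):ℝ) := by exact_mod_cast hmlt
      rw [Nat.cast_sub (by omega : 1 ≤ p + q)] at this
      push_cast at this ⊢
      linarith
    have hexp : (k:ℝ) * α * (2 * nR ^ 2) = 2 * nR * ((k:ℝ) * (p:ℝ)) + (k:ℝ) * Real.sqrt 2 := by
      rw [hα, hε]; field_simp
    rw [Int.floor_eq_iff]
    constructor
    · have key : (d:ℝ) * (2 * nR ^ 2) ≤ (k:ℝ) * α * (2 * nR ^ 2) := by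
        rw [hexp, ← hdmR]; nlinarith
      have := le_of_mul_le_mul_right key (by positivity : (0:ℝ) < 2 * nR ^ 2)
      push_cast
      linarith
    · have key : (k:ℝ) * α * (2 * nR ^ 2) < ((d:ℝ) + 1) * (2 * nR ^ 2) := by
        rw [hexp, ← hdmR]
        nlinarith
      have := lt_of_mul_lt_mul_right key (by positivity : (0:ℝ) ≤ 2 * nR ^ 2)
      push_cast
      linarith
  -- the middle word
  refine ⟨(List.range (p + q - 2)).map
      (fun j => if (j+1) * p / (p + q) < (j+2) * p / (p + q) then false else true), ?_, ?_⟩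
  · -- decomposition of the Christoffel word
    obtain ⟨m, hm⟩ : ∃ m, p + q = m + 2 := ⟨p + q - 2, by omega⟩
    unfold christoffel
    rw [hm]
    simp only [Nat.add_sub_cancel]
    rw [List.range_succ, List.map_append, List.range_succ_eq_map, List.map_cons, List.map_map]
    have hf0 : (if 0 * p / (m+2) < (0+1) * p / (m+2) then false else true) = true := by
      have : p / (m+2) = 0 := Nat.div_eq_of_lt (by omega)
      simp [this]
    have hfl : (if (m+1) * p / (m+2) < (m+1+1) * p / (m+2) then false else true) = false := by
      obtain ⟨p', rfl⟩ : ∃ p', p = p' + 1 := ⟨p - 1, by omega⟩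
      have h1 : (m+1) * (p'+1) = (m+2) * p' + q := by
        have : q = m + 1 - p' := by omega
        rw [this]
        have hple : p' ≤ m + 1 := by omega
        zify [hple]
        ring
      have h2 : (m+1) * (p'+1) / (m+2) = p' := by
        rw [h1, Nat.mul_add_div (by omega), Nat.div_eq_of_lt (by omega)]
        omega
      have h3 : (m+1+1) * (p'+1) / (m+2) = p' + 1 := by
        rw [show m+1+1 = m+2 from rfl, Nat.mul_div_cancel_left _ (by omega : 0 < m+2)]
      rw [h2, h3]
      simp
    simp only [List.map_cons, List.map_nil, List.map_map, List.cons_append]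
    congr 1
    congr 1
    simpa using hfl
  · -- the Sturmian word
    refine ⟨mw α, ⟨balanced_mw α h0 h1, aperiodic_mw α h0 h1 hirr⟩, ?_⟩
    intro j
    have hjlen : (j : ℕ) < p + q - 2 := by
      have := j.2
      simpa using this
    have e1 : gfl α (j : ℕ) = ((((j:ℕ)+1) * p / (p + q) : ℕ) : ℤ) := by
      have := hfloor ((j:ℕ)+1) (by omega) (by omega)
      unfold gfl
      push_cast at this ⊢
      convert this using 3
    have e2 : gfl α ((j : ℕ)+1) = ((((j:ℕ)+2) * p / (p + q) : ℕ) : ℤ) := by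
      have := hfloor ((j:ℕ)+2) (by omega) (by omega)
      unfold gfl
      push_cast at this ⊢
      convert this using 3
      ring
    show mw α (j:ℕ) = _
    unfold mw
    rw [e1, e2]
    simp only [List.get_eq_getElem, List.getElem_map, List.getElem_range, Nat.cast_lt]

end StringBricks
end
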